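/- arXiv:1910.14477 — 3 statements merged into one kernel-verified Lean document; each statement's English description precedes it below -/
import Mathlib

section
/- From local to semi-global Lieb–Robinson bounds (Theorem 4, part i). Let ξ ≥ 1, ξ₀ > 0 and t ∈ ℝ, and suppose the Hermitian operator H₀ satisfies ‖[O_X̂(H₀,s), O_Ŷ]‖ ≤ F(s,X̂,Ŷ)·e^{−d(X̂,Ŷ)/ξ₀}·‖O_X̂‖·‖O_Ŷ‖ for s ∈ {t,−t}, for all subsets X̂,Ŷ ⊆ Λ with diam(X̂) ≤ 2ξ+1 and diam(Ŷ) ≤ 2ξ+1, and all operators O_X̂, O_Ŷ supported on X̂, Ŷ, where F(t,·,·) = F(−t,·,·). Define F̃(t) := sup{F(t,X̂,Ŷ) : X̂,Ŷ ⊆ Λ, diam(X̂) ≤ 2ξ+1, diam(Ŷ) ≤ 2ξ+1}. Then for every X ⊆ Λ with diam(X) ≤ 2ξ+1, every L ⊆ Λ, and all operators O_X, O_L supported on X and L: ‖[O_X(H₀,t), O_L]‖ ≤ 2·|L^{(ξ)}|·F̃(t)·e^{−d(X,L)/ξ₀}·‖O_X‖·‖O_L‖. -/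
open scoped Classical

namespace LightCone

variable {Λ : Type} [Fintype Λ] [DecidableEq Λ]

/-- `dist` is an integer-valued metric on `Λ`. -/
def IsMetricN (dist : Λ → Λ → ℕ) : Prop :=
  (∀ i j, dist i j = 0 ↔ i = j) ∧ (∀ i j, dist i j = dist j i) ∧
  (∀ i j k, dist i k ≤ dist i j + dist j k)

/-- `d(X,Y)`: the minimum distance between the subsets `X` and `Y`. -/
noncomputable def setDist (dist : Λ → Λ → ℕ) (X Y : Finset Λ) : ℕ :=
  sInf {n : ℕ | ∃ i ∈ X, ∃ j ∈ Y, dist i j = n}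

/-- `diam(X) = 1 + max_{i,j ∈ X} d(i,j)`. -/
def diam (dist : Λ → Λ → ℕ) (X : Finset Λ) : ℕ :=
  1 + X.sup fun i => X.sup fun j => dist i j

/-- `X[r] = {i ∈ Λ | d(i,X) ≤ r}`. -/
noncomputable def ball (dist : Λ → Λ → ℕ) (X : Finset Λ) (r : ℝ) : Finset Λ :=
  Finset.univ.filter fun i => ∃ j ∈ X, (dist i j : ℝ) ≤ r

/-- `net` is a choice of the coarse-grained lattice `Λ^{(ξ)}`:
a subset of minimum cardinality such that `net[ξ] = Λ`. -/
def IsNet (dist : Λ → Λ → ℕ) (ξ : ℝ) (net : Finset Λ) : Prop :=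
  (∀ i : Λ, ∃ j ∈ net, (dist i j : ℝ) ≤ ξ) ∧
  (∀ L : Finset Λ, (∀ i : Λ, ∃ j ∈ L, (dist i j : ℝ) ≤ ξ) → net.card ≤ L.card)

/-- `C` is a choice of the coarse-grained subset `X^{(ξ)} ⊆ Λ^{(ξ)}`:
a subset of `net` of minimum cardinality such that `C[ξ] ⊇ X`. -/
def IsCoarse (dist : Λ → Λ → ℕ) (ξ : ℝ) (net X C : Finset Λ) : Prop :=
  C ⊆ net ∧ (∀ i ∈ X, ∃ j ∈ C, (dist i j : ℝ) ≤ ξ) ∧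
  (∀ C' : Finset Λ, C' ⊆ net → (∀ i ∈ X, ∃ j ∈ C', (dist i j : ℝ) ≤ ξ) → C.card ≤ C'.card)

/-- `γ` is a geometric constant for the lattice `(Λ, dist)` in spatial dimension `D`. -/
def GeomConst (D : ℕ) (γ : ℝ) (dist : Λ → Λ → ℕ) : Prop :=
  (∀ X : Finset Λ, (X.card : ℝ) ≤ γ * (diam dist X : ℝ) ^ D) ∧
  (∀ (i : Λ) (r : ℝ), 1 ≤ r → ((ball dist {i} r).card : ℝ) ≤ γ * (2 * r) ^ D) ∧
  (∀ ξ : ℝ, 1 ≤ ξ → ∀ net X C : Finset Λ, IsNet dist ξ net → IsCoarse dist ξ net X C →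
    (C.card : ℝ) ≤ max 1 (γ * ((diam dist X : ℝ) / ξ) ^ D)) ∧
  (∀ ξ r : ℝ, 1 ≤ ξ → ξ ≤ r → ∀ net : Finset Λ, IsNet dist ξ net → ∀ i : Λ,
    ((net.filter fun j => r ≤ (dist i j : ℝ) ∧ (dist i j : ℝ) < r + ξ).card : ℝ)
      ≤ 2 * γ * D * (2 * r / ξ) ^ (D - 1))

variable (dim : Λ → ℕ)

/-- Operators on the total Hilbert space `⨂_{i ∈ Λ} ℂ^{dim i}`, realized concretely as
matrices indexed by the classical configurations `∀ i, Fin (dim i)`. -/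
abbrev Op := Matrix (∀ i, Fin (dim i)) (∀ i, Fin (dim i)) ℂ

/-- The operator norm (the `ℓ² → ℓ²` norm). -/
noncomputable def opNorm (M : Op dim) : ℝ := ‖Matrix.toEuclideanCLM (𝕜 := ℂ) M‖

/-- `M` is supported on `X`, i.e. `M = M_X ⊗ 1_{Xᶜ}`. -/
def SupportedOn (X : Finset Λ) (M : Op dim) : Prop :=
  (∀ a b : ∀ i, Fin (dim i), (∃ i ∉ X, a i ≠ b i) → M a b = 0) ∧
  (∀ a b a' b' : ∀ i, Fin (dim i),
    (∀ i ∈ X, a i = a' i) → (∀ i ∈ X, b i = b' i) →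
    (∀ i ∉ X, a i = b i) → (∀ i ∉ X, a' i = b' i) → M a b = M a' b')

/-- Heisenberg evolution `O(A,t) = e^{iAt} O e^{-iAt}`. -/
noncomputable def heis (A : Op dim) (t : ℝ) (O : Op dim) : Op dim :=
  NormedSpace.exp ((Complex.I * (t : ℂ)) • A) * O *
    NormedSpace.exp ((-(Complex.I * (t : ℂ))) • A)

/-- `‖[A,B]‖`. -/
noncomputable def commNorm (A B : Op dim) : ℝ := opNorm dim (A * B - B * A)

/-- The local approximation `(tr_{Xᶜ} M ⊗ 1_{Xᶜ}) / tr_{Xᶜ}(1)` of `M` on the subset `X`. -/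
noncomputable def localApprox (X : Finset Λ) (M : Op dim) : Op dim :=
  fun a b =>
    if ∀ i, i ∉ X → a i = b i then
      (∏ i ∈ Xᶜ, (dim i : ℂ))⁻¹ *
        ∑ c : ∀ i : {i : Λ // i ∉ X}, Fin (dim i.1),
          M (fun i => if h : i ∈ X then a i else c ⟨i, h⟩)
            (fun i => if h : i ∈ X then b i else c ⟨i, h⟩)
    else 0

/-- `h` is a long-range Hamiltonian with parameters `g₀`, `α` (in spatial dimension `D`). -/
def IsLongRange (D : ℕ) (dist : Λ → Λ → ℕ) (g₀ α : ℝ) (h : Finset Λ → Op dim) : Prop :=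
  (∀ Z, (h Z).IsHermitian) ∧ (∀ Z, SupportedOn dim Z (h Z)) ∧
  (∀ i j : Λ,
    ∑ Z ∈ Finset.univ.filter (fun Z : Finset Λ => i ∈ Z ∧ j ∈ Z), opNorm dim (h Z)
      ≤ g₀ * ((dist i j : ℝ) + 1) ^ (-α)) ∧
  (∀ (i : Λ) (r : ℝ), 1 ≤ r →
    ∑ Z ∈ Finset.univ.filter (fun Z : Finset Λ => i ∈ Z ∧ r ≤ (diam dist Z : ℝ)),
        opNorm dim (h Z)
      ≤ r ^ (-(α - (D : ℝ))))



section Aux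

open Matrix

set_option linter.unusedSectionVars false
set_option synthInstance.maxHeartbeats 1000000
set_option maxHeartbeats 1600000

variable {Λ : Type} [Fintype Λ] [DecidableEq Λ] {dim : Λ → ℕ}

lemma supportedOn_univ (M : Op dim) : SupportedOn dim Finset.univ M := by
  constructor
  · rintro a b ⟨i, hi, -⟩
    exact absurd (Finset.mem_univ i) hi
  · intro a b a' b' h1 h2 _ _
    have ha : a = a' := funext fun i => h1 i (Finset.mem_univ i)
    have hb : b = b' := funext fun i => h2 i (Finset.mem_univ i)
    rw [ha, hb]

lemma SupportedOn.mono {S T : Finset Λ} (hST : S ⊆ T) {M : Op dim}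
    (h : SupportedOn dim S M) : SupportedOn dim T M := by
  constructor
  · rintro a b ⟨i, hiT, hab⟩
    exact h.1 a b ⟨i, fun hiS => hiT (hST hiS), hab⟩
  · intro a b a' b' h1 h2 h3 h4
    by_cases hc : ∀ i, i ∉ S → a i = b i
    · refine h.2 a b a' b' (fun i hi => h1 i (hST hi)) (fun i hi => h2 i (hST hi)) hc ?_
      intro i hiS
      by_cases hiT : i ∈ T
      · rw [← h1 i hiT, ← h2 i hiT]; exact hc i hiS
      · exact h4 i hiT
    · push_neg at hc
      obtain ⟨i, hiS, hab⟩ := hc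
      have hiT : i ∈ T := by
        by_contra hiT; exact hab (h3 i hiT)
      have hab' : a' i ≠ b' i := by rw [← h1 i hiT, ← h2 i hiT]; exact hab
      rw [h.1 a b ⟨i, hiS, hab⟩, h.1 a' b' ⟨i, hiS, hab'⟩]

lemma supportedOn_one (S : Finset Λ) : SupportedOn dim S (1 : Op dim) := by
  constructor
  · rintro a b ⟨i, -, hab⟩
    exact Matrix.one_apply_ne fun h => hab (congrFun h i)
  · intro a b a' b' h1 h2 h3 h4
    by_cases hab : a = b
    · have hab' : a' = b' := funext fun i => by
        by_cases hi : i ∈ S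
        · rw [← h1 i hi, ← h2 i hi, hab]
        · exact h4 i hi
      rw [hab, hab', Matrix.one_apply_eq, Matrix.one_apply_eq]
    · have hab' : a' ≠ b' := fun h => hab (funext fun i => by
        by_cases hi : i ∈ S
        · rw [h1 i hi, h2 i hi, h]
        · exact h3 i hi)
      rw [Matrix.one_apply_ne hab, Matrix.one_apply_ne hab']

lemma commute_of_disjoint {X Y : Finset Λ} (hXY : ∀ i, ¬(i ∈ X ∧ i ∈ Y))
    {M N : Op dim} (hM : SupportedOn dim X M) (hN : SupportedOn dim Y N) :
    M * N = N * M := by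
  ext x y
  rw [Matrix.mul_apply, Matrix.mul_apply]
  by_cases h : ∀ i, i ∉ X → i ∉ Y → x i = y i
  · have hz := fun i => (em (i ∈ X))
    set z : ∀ i, Fin (dim i) := fun i => if i ∈ X then y i else x i with hzdef
    set w : ∀ i, Fin (dim i) := fun i => if i ∈ Y then y i else x i with hwdef
    rw [Finset.sum_eq_single z ?v1 (by simp), Finset.sum_eq_single w ?v2 (by simp)]
    case v1 =>
      intro u _ hu
      obtain ⟨i, hi⟩ : ∃ i, u i ≠ z i := by
        by_contra hc; push_neg at hc; exact hu (funext hc)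
      by_cases hiX : i ∈ X
      · have hiY : i ∉ Y := fun hy => hXY i ⟨hiX, hy⟩
        have : u i ≠ y i := by simpa [hzdef, hiX] using hi
        rw [hN.1 u y ⟨i, hiY, this⟩, mul_zero]
      · have : x i ≠ u i := by
          intro e; exact hi (by simp [hzdef, hiX, ← e])
        rw [hM.1 x u ⟨i, hiX, this⟩, zero_mul]
    case v2 =>
      intro u _ hu
      obtain ⟨i, hi⟩ : ∃ i, u i ≠ w i := by
        by_contra hc; push_neg at hc; exact hu (funext hc)
      by_cases hiY : i ∈ Y
      · have hiX : i ∉ X := fun hx => hXY i ⟨hx, hiY⟩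
        have : u i ≠ y i := by simpa [hwdef, hiY] using hi
        rw [hM.1 u y ⟨i, hiX, this⟩, mul_zero]
      · have : x i ≠ u i := by
          intro e; exact hi (by simp [hwdef, hiY, ← e])
        rw [hN.1 x u ⟨i, hiY, this⟩, zero_mul]
    have e1 : M x z = M w y := by
      refine hM.2 x z w y ?_ ?_ ?_ ?_
      · intro i hi
        have hiY : i ∉ Y := fun hy => hXY i ⟨hi, hy⟩
        simp [hwdef, hiY]
      · intro i hi; simp [hzdef, hi]
      · intro i hi; simp [hzdef, hi]
      · intro i hi
        by_cases hiY : i ∈ Y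
        · simp [hwdef, hiY]
        · simp [hwdef, hiY, h i hi hiY]
    have e2 : N z y = N x w := by
      refine hN.2 z y x w ?_ ?_ ?_ ?_
      · intro i hi
        have hiX : i ∉ X := fun hx => hXY i ⟨hx, hi⟩
        simp [hzdef, hiX]
      · intro i hi; simp [hwdef, hi]
      · intro i hi
        by_cases hiX : i ∈ X
        · simp [hzdef, hiX]
        · simp [hzdef, hiX, h i hiX hi]
      · intro i hi; simp [hwdef, hi]
    rw [e1, e2]; ring
  · push_neg at h
    obtain ⟨i, hiX, hiY, hxy⟩ := h
    rw [Finset.sum_eq_zero, Finset.sum_eq_zero]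
    · intro u _
      by_cases hu : u i = x i
      · have : u i ≠ y i := by rw [hu]; exact hxy
        rw [hM.1 u y ⟨i, hiX, this⟩, mul_zero]
      · rw [hN.1 x u ⟨i, hiY, fun e => hu e.symm⟩, zero_mul]
    · intro u _
      by_cases hu : u i = x i
      · have : u i ≠ y i := by rw [hu]; exact hxy
        rw [hN.1 u y ⟨i, hiY, this⟩, mul_zero]
      · rw [hM.1 x u ⟨i, hiX, fun e => hu e.symm⟩, zero_mul]

lemma SupportedOn.conjTranspose {S : Finset Λ} {M : Op dim} (h : SupportedOn dim S M) :
    SupportedOn dim S Mᴴ := by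
  constructor
  · rintro a b ⟨i, hi, hab⟩
    have := h.1 b a ⟨i, hi, fun e => hab e.symm⟩
    simp [Matrix.conjTranspose_apply, this]
  · intro a b a' b' h1 h2 h3 h4
    simp only [Matrix.conjTranspose_apply]
    rw [h.2 b a b' a' h2 h1 (fun i hi => (h3 i hi).symm) (fun i hi => (h4 i hi).symm)]

open scoped Matrix.Norms.L2Operator in
lemma opNorm_eq (M : Op dim) : opNorm dim M = ‖M‖ := rfl

section OpNorm
open scoped Matrix.Norms.L2Operator
attribute [local instance] Matrix.instL2OpNormedSpace

lemma opNorm_nonneg' (M : Op dim) : 0 ≤ opNorm dim M := by rw [opNorm_eq]; exact norm_nonneg M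

lemma opNorm_mul_le' (M N : Op dim) : opNorm dim (M * N) ≤ opNorm dim M * opNorm dim N := by
  simp only [opNorm_eq]; exact Matrix.l2_opNorm_mul M N

lemma opNorm_sub_le' (M N : Op dim) : opNorm dim (M - N) ≤ opNorm dim M + opNorm dim N := by
  simp only [opNorm_eq]; exact norm_sub_le M N

lemma opNorm_add_le' (M N : Op dim) : opNorm dim (M + N) ≤ opNorm dim M + opNorm dim N := by
  simp only [opNorm_eq]; exact norm_add_le M N

lemma opNorm_sum_le' {α : Type} (s : Finset α) (f : α → Op dim) :
    opNorm dim (∑ a ∈ s, f a) ≤ ∑ a ∈ s, opNorm dim (f a) := by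
  simp only [opNorm_eq]; exact norm_sum_le s f

lemma opNorm_smul' (c : ℂ) (M : Op dim) : opNorm dim (c • M) = ‖c‖ * opNorm dim M := by
  simp only [opNorm_eq]; exact norm_smul c M

lemma opNorm_zero' : opNorm dim (0 : Op dim) = 0 := by
  simp only [opNorm_eq]; exact norm_zero

lemma opNorm_conjTranspose' (M : Op dim) : opNorm dim Mᴴ = opNorm dim M := by
  simp only [opNorm_eq]; exact Matrix.l2_opNorm_conjTranspose M

lemma one_ne_zero_op [∀ i, NeZero (dim i)] : (1 : Op dim) ≠ 0 := by
  intro h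
  have hx : ∀ i, Fin (dim i) := fun i => ⟨0, Nat.pos_of_ne_zero (NeZero.ne _)⟩
  have := congrFun (congrFun h hx) hx
  rw [Matrix.one_apply_eq] at this
  simp at this

lemma opNorm_one' [∀ i, NeZero (dim i)] : opNorm dim (1 : Op dim) = 1 := by
  have h2 : opNorm dim ((1 : Op dim)ᴴ * 1) = opNorm dim (1 : Op dim) * opNorm dim 1 := by
    simp only [opNorm_eq]; exact Matrix.l2_opNorm_conjTranspose_mul_self 1
  rw [Matrix.conjTranspose_one, mul_one] at h2
  have h0 : opNorm dim (1 : Op dim) ≠ 0 := by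
    simp only [opNorm_eq]
    simpa using one_ne_zero_op (dim := dim)
  have h3 : opNorm dim (1 : Op dim) * opNorm dim 1 = opNorm dim 1 * 1 := by
    rw [mul_one, ← h2]
  exact (mul_left_cancel₀ h0 h3)

lemma opNorm_of_unitary' [∀ i, NeZero (dim i)] {W : Op dim} (hW : W * Wᴴ = 1) :
    opNorm dim W = 1 := by
  have h2 : opNorm dim ((Wᴴ)ᴴ * Wᴴ) = opNorm dim Wᴴ * opNorm dim Wᴴ := by
    simp only [opNorm_eq]; exact Matrix.l2_opNorm_conjTranspose_mul_self Wᴴ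
  rw [Matrix.conjTranspose_conjTranspose, hW, opNorm_one'] at h2
  have h3 : opNorm dim Wᴴ = 1 := by
    rcases mul_self_eq_one_iff.mp h2.symm with h | h
    · exact h
    · exfalso; have := opNorm_nonneg' (dim := dim) Wᴴ; rw [h] at this; linarith
  rw [← opNorm_conjTranspose' W, h3]

end OpNorm

end Aux

section Weyl

variable {Λ : Type} [Fintype Λ] [DecidableEq Λ] (dim : Λ → ℕ) [∀ i, NeZero (dim i)]

set_option linter.unusedSectionVars false
set_option synthInstance.maxHeartbeats 1000000
set_option maxHeartbeats 1600000

open Matrix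

/-- `ω_i = e^{2πi/d_i}`. -/
noncomputable def siteOmega (dim : Λ → ℕ) (i : Λ) : ℂ :=
  Complex.exp (2 * Real.pi * Complex.I / (dim i))

lemma siteOmega_ne_zero (i : Λ) : siteOmega dim i ≠ 0 := Complex.exp_ne_zero _

lemma abs_siteOmega (i : Λ) : ‖siteOmega dim i‖ = 1 := by
  have h : (2 * (Real.pi : ℂ) * Complex.I / (dim i))
      = ((2 * Real.pi / (dim i) : ℝ) : ℂ) * Complex.I := by
    push_cast; ring
  rw [siteOmega, h, Complex.norm_exp_ofReal_mul_I]

lemma isPrimitiveRoot_siteOmega (i : Λ) :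
    IsPrimitiveRoot (siteOmega dim i) (dim i) :=
  Complex.isPrimitiveRoot_exp _ (NeZero.ne _)

/-- Character orthogonality on a single site. -/
lemma site_sum (i : Λ) (u v : Fin (dim i)) :
    ∑ β : Fin (dim i), siteOmega dim i ^ ((β : ℕ) * (u : ℕ)) *
      (starRingEnd ℂ) (siteOmega dim i ^ ((β : ℕ) * (v : ℕ)))
    = if u = v then (dim i : ℂ) else 0 := by
  have hd : (dim i) ≠ 0 := NeZero.ne _
  have hprim := isPrimitiveRoot_siteOmega (dim := dim) i
  have hω1 : siteOmega dim i ^ (dim i) = 1 := hprim.pow_eq_one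
  have hne : siteOmega dim i ≠ 0 := siteOmega_ne_zero dim i
  have hconj : (starRingEnd ℂ) (siteOmega dim i) = (siteOmega dim i)⁻¹ := by
    have habs := abs_siteOmega (dim := dim) i
    apply eq_inv_of_mul_eq_one_left
    rw [mul_comm, Complex.mul_conj, Complex.normSq_eq_norm_sq, habs]
    norm_num
  set ω := siteOmega dim i with hωdef
  set ζ : ℂ := ω ^ (u : ℕ) * (ω⁻¹) ^ (v : ℕ) with hζ
  have hterm : ∀ β : Fin (dim i),
      ω ^ ((β : ℕ) * (u : ℕ)) * (starRingEnd ℂ) (ω ^ ((β : ℕ) * (v : ℕ)))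
        = ζ ^ (β : ℕ) := by
    intro β
    rw [map_pow, hconj, hζ, mul_pow, mul_comm ((β : ℕ)) ((u : ℕ)),
      mul_comm ((β : ℕ)) ((v : ℕ)), pow_mul, pow_mul]
  simp only [hterm]
  by_cases huv : u = v
  · subst huv
    have hζ1 : ζ = 1 := by
      rw [hζ, inv_pow, mul_inv_cancel₀ (pow_ne_zero _ hne)]
    simp [hζ1]
  · rw [if_neg huv]
    have h1 : (ω ^ (u : ℕ)) ^ (dim i) = 1 := by
      rw [← pow_mul, mul_comm, pow_mul, hω1, one_pow]
    have h2 : ((ω⁻¹) ^ (v : ℕ)) ^ (dim i) = 1 := by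
      rw [← pow_mul, mul_comm, pow_mul, inv_pow, hω1, inv_one, one_pow]
    have hζd : ζ ^ (dim i) = 1 := by rw [hζ, mul_pow, h1, h2, one_mul]
    have hζne1 : ζ ≠ 1 := by
      intro hone
      have hz : ζ = ω ^ ((u : ℤ) - (v : ℤ)) := by
        rw [hζ, inv_pow, zpow_sub₀ hne, zpow_natCast, zpow_natCast, div_eq_mul_inv]
      rw [hz] at hone
      have hdvd : ((dim i : ℤ)) ∣ ((u : ℤ) - (v : ℤ)) :=
        (hprim.zpow_eq_one_iff_dvd _).mp hone
      have hu := u.isLt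
      have hv := v.isLt
      have huvne : (u : ℕ) ≠ (v : ℕ) := fun h => huv (Fin.ext h)
      have hdvd' : dim i ∣ ((u : ℤ) - (v : ℤ)).natAbs := by
        have h := Int.natAbs_dvd_natAbs.mpr hdvd
        simpa using h
      have hlt : ((u : ℤ) - (v : ℤ)).natAbs < dim i := by omega
      have h0 := Nat.eq_zero_of_dvd_of_lt hdvd' hlt
      omega
    rw [Fin.sum_univ_eq_sum_range (fun k => ζ ^ k), geom_sum_eq hζne1, hζd]
    simp

/-- The phase factor of a (generalized) Weyl operator. -/
noncomputable def wphase (Q : Finset Λ) (b z : ∀ i, Fin (dim i)) : ℂ :=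
  ∏ i ∈ Q, siteOmega dim i ^ ((b i : ℕ) * (z i : ℕ))

lemma wphase_mul_conj (Q : Finset Λ) (b z : ∀ i, Fin (dim i)) :
    wphase dim Q b z * (starRingEnd ℂ) (wphase dim Q b z) = 1 := by
  have habs : ‖wphase dim Q b z‖ = 1 := by
    rw [wphase, norm_prod]
    rw [Finset.prod_eq_one]
    intro i _
    rw [norm_pow, abs_siteOmega, one_pow]
  rw [Complex.mul_conj, Complex.normSq_eq_norm_sq, habs]
  norm_num

/-- Full-space character orthogonality. -/
lemma phase_sum (Q : Finset Λ) (u v : ∀ i, Fin (dim i)) :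
    ∑ b : ∀ i, Fin (dim i), wphase dim Q b u * (starRingEnd ℂ) (wphase dim Q b v)
    = if ∀ i ∈ Q, u i = v i then (Fintype.card (∀ i, Fin (dim i)) : ℂ) else 0 := by
  set F : ∀ i : Λ, Fin (dim i) → ℂ := fun i β => (if i ∈ Q then
      siteOmega dim i ^ ((β : ℕ) * (u i : ℕ)) *
        (starRingEnd ℂ) (siteOmega dim i ^ ((β : ℕ) * (v i : ℕ))) else 1) with hF
  have hterm : ∀ b : ∀ i, Fin (dim i),
      wphase dim Q b u * (starRingEnd ℂ) (wphase dim Q b v)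
      = ∏ i : Λ, F i (b i) := by
    intro b
    rw [wphase, wphase, map_prod, ← Finset.prod_mul_distrib, ← Finset.prod_filter,
      Finset.filter_univ_mem]
  rw [Finset.sum_congr rfl fun b _ => hterm b]
  have hswap : (∑ b : ∀ i, Fin (dim i), ∏ i : Λ, F i (b i))
      = ∏ i : Λ, ∑ β : Fin (dim i), F i β := by
    rw [← Fintype.piFinset_univ, ← Finset.prod_univ_sum
      (fun i : Λ => (Finset.univ : Finset (Fin (dim i)))) F]
  rw [hswap]
  have hfac : ∀ i : Λ, (∑ β : Fin (dim i), F i β)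
      = if i ∈ Q then (if u i = v i then (dim i : ℂ) else 0) else (dim i : ℂ) := by
    intro i
    by_cases hi : i ∈ Q
    · simp only [hF, hi, if_true]
      exact site_sum dim i (u i) (v i)
    · simp [hF, hi]
  rw [Finset.prod_congr rfl fun i _ => hfac i]
  by_cases hall : ∀ i ∈ Q, u i = v i
  · rw [if_pos hall]
    have : ∀ i : Λ, (if i ∈ Q then (if u i = v i then (dim i : ℂ) else 0)
        else (dim i : ℂ)) = (dim i : ℂ) := by
      intro i
      by_cases hi : i ∈ Q
      · simp [hi, hall i hi]
      · simp [hi]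
    rw [Finset.prod_congr rfl fun i _ => this i]
    simp [Fintype.card_pi, Nat.cast_prod, Fintype.card_fin]
  · rw [if_neg hall]
    push_neg at hall
    obtain ⟨i₀, hi₀Q, hi₀⟩ := hall
    exact Finset.prod_eq_zero (Finset.mem_univ i₀) (by simp [hi₀Q, hi₀])

/-- Shift a configuration upward on `Q`. -/
def shiftQ (Q : Finset Λ) (a z : ∀ i, Fin (dim i)) : ∀ i, Fin (dim i) :=
  fun i => if i ∈ Q then z i + a i else z i

/-- Shift a configuration downward on `Q`. -/
def unshiftQ (Q : Finset Λ) (a z : ∀ i, Fin (dim i)) : ∀ i, Fin (dim i) :=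
  fun i => if i ∈ Q then z i - a i else z i

/-- Replace the `Q`-coordinates of `z` by those of `c`. -/
def mergeQ (Q : Finset Λ) (c z : ∀ i, Fin (dim i)) : ∀ i, Fin (dim i) :=
  fun i => if i ∈ Q then c i else z i

lemma eq_shiftQ_iff (Q : Finset Λ) (a x y : ∀ i, Fin (dim i)) :
    x = shiftQ dim Q a y ↔ y = unshiftQ dim Q a x := by
  simp only [funext_iff, shiftQ, unshiftQ]
  apply forall_congr'
  intro i
  by_cases hi : i ∈ Q
  · simp only [hi, if_true]
    constructor
    · intro h; rw [h]; exact (add_sub_cancel_right (y i) (a i)).symm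
    · intro h; rw [h]; exact (sub_add_cancel (x i) (a i)).symm
  · simp only [hi, if_false]
    exact eq_comm

/-- Generalized Weyl (shift-and-phase) operator on the region `Q`. -/
noncomputable def weyl (Q : Finset Λ) (a b : ∀ i, Fin (dim i)) : Op dim :=
  fun x y => if x = shiftQ dim Q a y then wphase dim Q b y else 0

lemma weyl_apply' (Q : Finset Λ) (a b z u : ∀ i, Fin (dim i)) :
    weyl dim Q a b z u = if u = unshiftQ dim Q a z then wphase dim Q b u else 0 := by
  simp only [weyl, eq_shiftQ_iff]

lemma supportedOn_weyl (Q : Finset Λ) (a b : ∀ i, Fin (dim i)) :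
    SupportedOn dim Q (weyl dim Q a b) := by
  constructor
  · rintro x y ⟨i, hi, hxy⟩
    rw [weyl]
    rw [if_neg]
    intro h
    apply hxy
    have := congrFun h i
    rw [this]
    simp [shiftQ, hi]
  · intro x y x' y' h1 h2 h3 h4
    rw [weyl, weyl]
    have hcond : (x = shiftQ dim Q a y) ↔ (x' = shiftQ dim Q a y') := by
      simp only [funext_iff, shiftQ]
      apply forall_congr'
      intro i
      by_cases hi : i ∈ Q
      · simp only [hi, if_true]
        rw [h1 i hi, h2 i hi]
      · simp only [hi, if_false]
        exact iff_of_true (h3 i hi) (h4 i hi)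
    have hph : wphase dim Q b y = wphase dim Q b y' := by
      rw [wphase, wphase]
      exact Finset.prod_congr rfl fun i hi => by rw [h2 i hi]
    rw [hph]
    by_cases hc : x' = shiftQ dim Q a y'
    · rw [if_pos (hcond.mpr hc), if_pos hc]
    · rw [if_neg (fun h => hc (hcond.mp h)), if_neg hc]

lemma weyl_mul_conjTranspose (Q : Finset Λ) (a b : ∀ i, Fin (dim i)) :
    weyl dim Q a b * (weyl dim Q a b)ᴴ = 1 := by
  ext x y
  rw [Matrix.mul_apply, Matrix.one_apply]
  have hterm : ∀ z, weyl dim Q a b x z * (weyl dim Q a b)ᴴ z y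
      = if z = unshiftQ dim Q a x then
          (if z = unshiftQ dim Q a y then
            wphase dim Q b z * (starRingEnd ℂ) (wphase dim Q b z) else 0) else 0 := by
    intro z
    rw [Matrix.conjTranspose_apply, weyl_apply', weyl_apply', Complex.star_def]
    by_cases h1 : z = unshiftQ dim Q a x
    · by_cases h2 : z = unshiftQ dim Q a y
      · have h3 : unshiftQ dim Q a x = unshiftQ dim Q a y := h1.symm.trans h2
        simp [h1, h2, h3]
      · have h3 : unshiftQ dim Q a x ≠ unshiftQ dim Q a y := fun e => h2 (h1.trans e)
        simp [h1, h2, h3]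
    · simp [h1]
  simp only [hterm]
  rw [Finset.sum_ite_eq' Finset.univ (unshiftQ dim Q a x)
    (fun z => if z = unshiftQ dim Q a y then
      wphase dim Q b z * (starRingEnd ℂ) (wphase dim Q b z) else 0), if_pos (Finset.mem_univ _)]
  have hinj : unshiftQ dim Q a x = unshiftQ dim Q a y ↔ x = y := by
    simp only [funext_iff, unshiftQ]
    apply forall_congr'
    intro i
    by_cases hi : i ∈ Q
    · simp only [hi, if_true]; exact sub_left_inj
    · simp only [hi, if_false]
  by_cases hxy : x = y
  · rw [if_pos (hinj.mpr hxy), if_pos hxy, wphase_mul_conj]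
  · rw [if_neg (fun h => hxy (hinj.mp h)), if_neg hxy]

lemma opNorm_weyl (Q : Finset Λ) (a b : ∀ i, Fin (dim i)) :
    opNorm dim (weyl dim Q a b) = 1 :=
  opNorm_of_unitary' (weyl_mul_conjTranspose dim Q a b)

lemma weyl_conj_apply (Q : Finset Λ) (a b : ∀ i, Fin (dim i)) (M : Op dim)
    (x y : ∀ i, Fin (dim i)) :
    (weyl dim Q a b * M * (weyl dim Q a b)ᴴ) x y
    = wphase dim Q b (unshiftQ dim Q a x) * M (unshiftQ dim Q a x) (unshiftQ dim Q a y)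
      * (starRingEnd ℂ) (wphase dim Q b (unshiftQ dim Q a y)) := by
  have h1 : ∀ v, (weyl dim Q a b * M) x v
      = wphase dim Q b (unshiftQ dim Q a x) * M (unshiftQ dim Q a x) v := by
    intro v
    rw [Matrix.mul_apply]
    simp only [weyl_apply', ite_mul, zero_mul]
    rw [Finset.sum_ite_eq' Finset.univ (unshiftQ dim Q a x)
      (fun u => wphase dim Q b u * M u v), if_pos (Finset.mem_univ _)]
  rw [Matrix.mul_apply]
  simp only [h1, Matrix.conjTranspose_apply, weyl_apply', Complex.star_def, apply_ite
    (starRingEnd ℂ), map_zero, mul_ite, mul_zero]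
  rw [Finset.sum_ite_eq' Finset.univ (unshiftQ dim Q a y)
    (fun v => wphase dim Q b (unshiftQ dim Q a x) * M (unshiftQ dim Q a x) v *
      (starRingEnd ℂ) (wphase dim Q b v)), if_pos (Finset.mem_univ _)]

/-- The partial depolarizing channel on `Q`, realized as an average over Weyl conjugations. -/
noncomputable def twirl (Q : Finset Λ) (M : Op dim) : Op dim :=
  ((Fintype.card (∀ i, Fin (dim i)) : ℂ) ^ 2)⁻¹ •
    ∑ a : ∀ i, Fin (dim i), ∑ b : ∀ i, Fin (dim i),
      weyl dim Q a b * M * (weyl dim Q a b)ᴴ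

lemma card_conf_ne_zero : (Fintype.card (∀ i, Fin (dim i)) : ℂ) ≠ 0 := by
  haveI : Nonempty (∀ i, Fin (dim i)) :=
    ⟨fun i => ⟨0, Nat.pos_of_ne_zero (NeZero.ne _)⟩⟩
  exact_mod_cast Fintype.card_ne_zero

lemma twirl_apply (Q : Finset Λ) (M : Op dim) (x y : ∀ i, Fin (dim i)) :
    twirl dim Q M x y = if ∀ i ∈ Q, x i = y i
      then (Fintype.card (∀ i, Fin (dim i)) : ℂ)⁻¹ *
        ∑ c : ∀ i, Fin (dim i), M (mergeQ dim Q c x) (mergeQ dim Q c y)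
      else 0 := by
  have hcard := card_conf_ne_zero (dim := dim)
  rw [twirl, Matrix.smul_apply]
  rw [show (∑ a : ∀ i, Fin (dim i), ∑ b : ∀ i, Fin (dim i),
      weyl dim Q a b * M * (weyl dim Q a b)ᴴ) x y
    = ∑ a : ∀ i, Fin (dim i), ∑ b : ∀ i, Fin (dim i),
      (weyl dim Q a b * M * (weyl dim Q a b)ᴴ) x y by
      rw [Matrix.sum_apply]
      exact Finset.sum_congr rfl fun a _ => by rw [Matrix.sum_apply]]
  have hinner : ∀ a, (∑ b : ∀ i, Fin (dim i), (weyl dim Q a b * M * (weyl dim Q a b)ᴴ) x y)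
      = if ∀ i ∈ Q, x i = y i then
          (Fintype.card (∀ i, Fin (dim i)) : ℂ) *
            M (unshiftQ dim Q a x) (unshiftQ dim Q a y)
        else 0 := by
    intro a
    simp only [weyl_conj_apply]
    have : ∀ b, wphase dim Q b (unshiftQ dim Q a x) * M (unshiftQ dim Q a x) (unshiftQ dim Q a y)
        * (starRingEnd ℂ) (wphase dim Q b (unshiftQ dim Q a y))
        = (wphase dim Q b (unshiftQ dim Q a x) *
            (starRingEnd ℂ) (wphase dim Q b (unshiftQ dim Q a y))) *
          M (unshiftQ dim Q a x) (unshiftQ dim Q a y) := by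
      intro b; ring
    rw [Finset.sum_congr rfl fun b _ => this b, ← Finset.sum_mul, phase_sum]
    have hcond : (∀ i ∈ Q, unshiftQ dim Q a x i = unshiftQ dim Q a y i)
        ↔ (∀ i ∈ Q, x i = y i) := by
      constructor
      · intro h i hi
        have h' := h i hi
        simp only [unshiftQ, hi, if_true] at h'
        exact sub_left_inj.mp h'
      · intro h i hi
        simp only [unshiftQ, hi, if_true]
        rw [h i hi]
    simp only [hcond, ite_mul, zero_mul]
  rw [Finset.sum_congr rfl fun a _ => hinner a]
  by_cases hc : ∀ i ∈ Q, x i = y i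
  · rw [if_pos hc]
    simp only [if_pos hc]
    have heq : ∀ a : ∀ i, Fin (dim i),
        M (unshiftQ dim Q a x) (unshiftQ dim Q a y)
        = M (mergeQ dim Q ((Equiv.piCongrRight fun i => Equiv.subLeft (x i)) a) x)
            (mergeQ dim Q ((Equiv.piCongrRight fun i => Equiv.subLeft (x i)) a) y) := by
      intro a
      have hx : unshiftQ dim Q a x
          = mergeQ dim Q ((Equiv.piCongrRight fun i => Equiv.subLeft (x i)) a) x := by
        funext i
        by_cases hi : i ∈ Q <;> simp [unshiftQ, mergeQ, hi, Equiv.subLeft]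
      have hy : unshiftQ dim Q a y
          = mergeQ dim Q ((Equiv.piCongrRight fun i => Equiv.subLeft (x i)) a) y := by
        funext i
        by_cases hi : i ∈ Q
        · simp [unshiftQ, mergeQ, hi, Equiv.subLeft, hc i hi]
        · simp [unshiftQ, mergeQ, hi]
      rw [hx, hy]
    rw [← Finset.mul_sum, Finset.sum_congr rfl fun a _ => heq a]
    rw [Equiv.sum_comp (Equiv.piCongrRight fun i => Equiv.subLeft (x i))
      (fun c => M (mergeQ dim Q c x) (mergeQ dim Q c y))]
    rw [smul_eq_mul, ← mul_assoc]
    congr 1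
    rw [sq]
    field_simp
  · rw [if_neg hc]
    simp only [if_neg hc, Finset.sum_const, smul_eq_mul, mul_zero, smul_zero]

lemma twirl_supportedOn {S Q : Finset Λ} {M : Op dim} (h : SupportedOn dim S M) :
    SupportedOn dim (S \ Q) (twirl dim Q M) := by
  constructor
  · rintro x y ⟨i, hi, hxy⟩
    rw [twirl_apply]
    by_cases hiQ : i ∈ Q
    · rw [if_neg]
      push_neg
      exact ⟨i, hiQ, hxy⟩
    · have hiS : i ∉ S := fun hS => hi (Finset.mem_sdiff.mpr ⟨hS, hiQ⟩)
      by_cases hcond : ∀ j ∈ Q, x j = y j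
      · rw [if_pos hcond, Finset.sum_eq_zero, mul_zero]
        intro c _
        refine h.1 _ _ ⟨i, hiS, ?_⟩
        simpa [mergeQ, hiQ] using hxy
      · rw [if_neg hcond]
  · intro x y x' y' h1 h2 h3 h4
    rw [twirl_apply, twirl_apply]
    have hcx : ∀ i ∈ Q, x i = y i :=
      fun i hi => h3 i (fun hmem => (Finset.mem_sdiff.mp hmem).2 hi)
    have hcx' : ∀ i ∈ Q, x' i = y' i :=
      fun i hi => h4 i (fun hmem => (Finset.mem_sdiff.mp hmem).2 hi)
    rw [if_pos hcx, if_pos hcx']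
    congr 1
    apply Finset.sum_congr rfl
    intro c _
    refine h.2 _ _ _ _ ?_ ?_ ?_ ?_
    · intro i hiS
      by_cases hiQ : i ∈ Q
      · simp [mergeQ, hiQ]
      · simpa [mergeQ, hiQ] using h1 i (Finset.mem_sdiff.mpr ⟨hiS, hiQ⟩)
    · intro i hiS
      by_cases hiQ : i ∈ Q
      · simp [mergeQ, hiQ]
      · simpa [mergeQ, hiQ] using h2 i (Finset.mem_sdiff.mpr ⟨hiS, hiQ⟩)
    · intro i hiS
      by_cases hiQ : i ∈ Q
      · simp [mergeQ, hiQ]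
      · simpa [mergeQ, hiQ] using h3 i (fun hmem => hiS (Finset.mem_sdiff.mp hmem).1)
    · intro i hiS
      by_cases hiQ : i ∈ Q
      · simp [mergeQ, hiQ]
      · simpa [mergeQ, hiQ] using h4 i (fun hmem => hiS (Finset.mem_sdiff.mp hmem).1)

lemma sum_sum_const_op (B : Op dim) :
    (∑ _a : ∀ i, Fin (dim i), ∑ _b : ∀ i, Fin (dim i), B)
      = ((Fintype.card (∀ i, Fin (dim i)) : ℂ) ^ 2) • B := by
  simp only [Finset.sum_const, Finset.card_univ, smul_smul]
  rw [← Nat.cast_smul_eq_nsmul ℂ]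
  congr 1
  push_cast
  ring

lemma sub_twirl_eq (Q : Finset Λ) (A : Op dim) :
    A - twirl dim Q A
      = ((Fintype.card (∀ i, Fin (dim i)) : ℂ) ^ 2)⁻¹ •
          ∑ a : ∀ i, Fin (dim i), ∑ b : ∀ i, Fin (dim i),
            (A * weyl dim Q a b - weyl dim Q a b * A) * (weyl dim Q a b)ᴴ := by
  have hterm : ∀ a b : ∀ i, Fin (dim i),
      (A * weyl dim Q a b - weyl dim Q a b * A) * (weyl dim Q a b)ᴴ
      = A - weyl dim Q a b * A * (weyl dim Q a b)ᴴ := by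
    intro a b
    rw [Matrix.sub_mul, mul_assoc, weyl_mul_conjTranspose dim Q a b, mul_one]
  simp only [hterm, Finset.sum_sub_distrib]
  rw [sum_sum_const_op, smul_sub, smul_smul,
    inv_mul_cancel₀ (pow_ne_zero 2 (card_conf_ne_zero (dim := dim))), one_smul, twirl]

lemma norm_coeff_conf : ‖((Fintype.card (∀ i, Fin (dim i)) : ℂ) ^ 2)⁻¹‖
    = ((Fintype.card (∀ i, Fin (dim i)) : ℝ) ^ 2)⁻¹ := by
  rw [norm_inv, norm_pow, Complex.norm_natCast]

lemma card_conf_pos : (0 : ℝ) < (Fintype.card (∀ i, Fin (dim i)) : ℝ) := by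
  haveI : Nonempty (∀ i, Fin (dim i)) :=
    ⟨fun i => ⟨0, Nat.pos_of_ne_zero (NeZero.ne _)⟩⟩
  exact_mod_cast Fintype.card_pos

lemma twirl_opNorm_le (Q : Finset Λ) (M : Op dim) :
    opNorm dim (twirl dim Q M) ≤ opNorm dim M := by
  have hn := card_conf_pos (dim := dim)
  set n : ℝ := (Fintype.card (∀ i, Fin (dim i)) : ℝ) with hndef
  have hterm : ∀ a b : ∀ i, Fin (dim i),
      opNorm dim (weyl dim Q a b * M * (weyl dim Q a b)ᴴ) ≤ opNorm dim M := by
    intro a b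
    refine le_trans (opNorm_mul_le' _ _) ?_
    refine le_trans (mul_le_mul_of_nonneg_right (opNorm_mul_le' _ _) (opNorm_nonneg' _)) ?_
    rw [opNorm_weyl, opNorm_conjTranspose', opNorm_weyl, one_mul, mul_one]
  have hbound : opNorm dim (∑ a : ∀ i, Fin (dim i), ∑ b : ∀ i, Fin (dim i),
      weyl dim Q a b * M * (weyl dim Q a b)ᴴ) ≤ (n * n) * opNorm dim M := by
    refine le_trans (opNorm_sum_le' _ _) ?_
    have h1 : ∀ a : ∀ i, Fin (dim i), opNorm dim (∑ b : ∀ i, Fin (dim i),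
        weyl dim Q a b * M * (weyl dim Q a b)ᴴ) ≤ n * opNorm dim M := by
      intro a
      refine le_trans (opNorm_sum_le' _ _) ?_
      refine le_trans (Finset.sum_le_sum fun b _ => hterm a b) ?_
      rw [Finset.sum_const, Finset.card_univ, nsmul_eq_mul]
    refine le_trans (Finset.sum_le_sum fun a _ => h1 a) ?_
    rw [Finset.sum_const, Finset.card_univ, nsmul_eq_mul]
    rw [← mul_assoc]
  rw [twirl, opNorm_smul', norm_coeff_conf]
  refine le_trans (mul_le_mul_of_nonneg_left hbound (by positivity)) ?_
  rw [← hndef]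
  rw [show (n ^ 2)⁻¹ * (n * n * opNorm dim M) = opNorm dim M * ((n * n) / n ^ 2) by ring]
  rw [show n * n / n ^ 2 = 1 by field_simp]
  rw [mul_one]

lemma sub_twirl_opNorm_le (Q : Finset Λ) (A : Op dim) (C : ℝ)
    (hC : ∀ a b : ∀ i, Fin (dim i),
      opNorm dim (A * weyl dim Q a b - weyl dim Q a b * A) ≤ C) :
    opNorm dim (A - twirl dim Q A) ≤ C := by
  have hn := card_conf_pos (dim := dim)
  set n : ℝ := (Fintype.card (∀ i, Fin (dim i)) : ℝ) with hndef
  have hterm : ∀ a b : ∀ i, Fin (dim i),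
      opNorm dim ((A * weyl dim Q a b - weyl dim Q a b * A) * (weyl dim Q a b)ᴴ) ≤ C := by
    intro a b
    refine le_trans (opNorm_mul_le' _ _) ?_
    rw [opNorm_conjTranspose', opNorm_weyl, mul_one]
    exact hC a b
  have hbound : opNorm dim (∑ a : ∀ i, Fin (dim i), ∑ b : ∀ i, Fin (dim i),
      (A * weyl dim Q a b - weyl dim Q a b * A) * (weyl dim Q a b)ᴴ) ≤ (n * n) * C := by
    refine le_trans (opNorm_sum_le' _ _) ?_
    have h1 : ∀ a : ∀ i, Fin (dim i), opNorm dim (∑ b : ∀ i, Fin (dim i),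
        (A * weyl dim Q a b - weyl dim Q a b * A) * (weyl dim Q a b)ᴴ) ≤ n * C := by
      intro a
      refine le_trans (opNorm_sum_le' _ _) ?_
      refine le_trans (Finset.sum_le_sum fun b _ => hterm a b) ?_
      rw [Finset.sum_const, Finset.card_univ, nsmul_eq_mul]
    refine le_trans (Finset.sum_le_sum fun a _ => h1 a) ?_
    rw [Finset.sum_const, Finset.card_univ, nsmul_eq_mul]
    rw [← mul_assoc]
  rw [sub_twirl_eq, opNorm_smul', norm_coeff_conf]
  refine le_trans (mul_le_mul_of_nonneg_left hbound (by positivity)) ?_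
  rw [← hndef]
  rw [show (n ^ 2)⁻¹ * (n * n * C) = C * ((n * n) / n ^ 2) by ring]
  rw [show n * n / n ^ 2 = 1 by field_simp]
  rw [mul_one]

lemma twirl_commutator {Q Y : Finset Λ} (hdisj : ∀ i, ¬(i ∈ Y ∧ i ∈ Q)) {N : Op dim}
    (hN : SupportedOn dim Y N) (A : Op dim) :
    twirl dim Q A * N - N * twirl dim Q A = twirl dim Q (A * N - N * A) := by
  have hWc : ∀ a b : ∀ i, Fin (dim i), weyl dim Q a b * N = N * weyl dim Q a b := fun a b =>
    commute_of_disjoint (fun i h => hdisj i ⟨h.2, h.1⟩) (supportedOn_weyl dim Q a b) hN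
  have hWHc : ∀ a b : ∀ i, Fin (dim i), (weyl dim Q a b)ᴴ * N = N * (weyl dim Q a b)ᴴ :=
    fun a b => commute_of_disjoint (fun i h => hdisj i ⟨h.2, h.1⟩)
      ((supportedOn_weyl dim Q a b).conjTranspose) hN
  have hterm : ∀ a b : ∀ i, Fin (dim i),
      (weyl dim Q a b * A * (weyl dim Q a b)ᴴ) * N
        - N * (weyl dim Q a b * A * (weyl dim Q a b)ᴴ)
      = weyl dim Q a b * (A * N - N * A) * (weyl dim Q a b)ᴴ := by
    intro a b
    rw [Matrix.mul_sub, Matrix.sub_mul]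
    congr 1
    · rw [mul_assoc (weyl dim Q a b * A), hWHc a b, ← mul_assoc,
        mul_assoc (weyl dim Q a b) A N]
    · rw [← mul_assoc, ← mul_assoc N (weyl dim Q a b) A, ← hWc a b,
        mul_assoc (weyl dim Q a b) N A]
  rw [twirl, twirl, Matrix.smul_mul, Matrix.mul_smul, ← smul_sub]
  congr 1
  simp only [Finset.sum_mul, Finset.mul_sum, ← Finset.sum_sub_distrib]
  exact Finset.sum_congr rfl fun a _ => Finset.sum_congr rfl fun b _ => hterm a b

end Weyl

section MainLemma

variable {Λ : Type} [Fintype Λ] [DecidableEq Λ] (dim : Λ → ℕ) [∀ i, NeZero (dim i)]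

set_option linter.unusedSectionVars false
set_option synthInstance.maxHeartbeats 1000000
set_option maxHeartbeats 1600000

open Matrix

lemma diam_le_of_ball {dist : Λ → Λ → ℕ} (hmet : IsMetricN dist) {ξ : ℝ} (hξ0 : 0 ≤ ξ)
    (j : Λ) {Q : Finset Λ} (hQ : ∀ i ∈ Q, (dist i j : ℝ) ≤ ξ) :
    (diam dist Q : ℝ) ≤ 2 * ξ + 1 := by
  have h2 : (0 : ℝ) ≤ 2 * ξ := by linarith
  have hsup : (Q.sup fun i => Q.sup fun k => dist i k) ≤ ⌊2 * ξ⌋₊ := by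
    apply Finset.sup_le
    intro i hi
    apply Finset.sup_le
    intro k hk
    apply Nat.le_floor
    have htri := hmet.2.2 i j k
    have hsymm := hmet.2.1 j k
    have hb1 := hQ i hi
    have hb2 := hQ k hk
    have hc : (dist i k : ℝ) ≤ (dist i j : ℝ) + (dist k j : ℝ) := by
      rw [hsymm] at htri
      exact_mod_cast htri
    linarith
  have hdiam : (diam dist Q : ℝ)
      = 1 + ((Q.sup fun i => Q.sup fun k => dist i k : ℕ) : ℝ) := by
    rw [diam]; push_cast; ring
  have hfl : ((⌊2 * ξ⌋₊ : ℕ) : ℝ) ≤ 2 * ξ := Nat.floor_le h2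
  have hcast : ((Q.sup fun i => Q.sup fun k => dist i k : ℕ) : ℝ) ≤ (⌊2 * ξ⌋₊ : ℝ) :=
    Nat.cast_le.mpr hsup
  rw [hdiam]
  linarith

lemma main_induction {dist : Λ → Λ → ℕ} (hmet : IsMetricN dist) {ξ : ℝ} (hξ0 : 0 ≤ ξ)
    {L : Finset Λ} {OL : Op dim} (hOL : SupportedOn dim L OL) {B : ℝ} (hB : 0 ≤ B) :
    ∀ C : Finset Λ, ∀ L' : Finset Λ, L' ⊆ L →
      (∀ i ∈ L', ∃ j ∈ C, (dist i j : ℝ) ≤ ξ) →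
      ∀ A : Op dim, SupportedOn dim ((L \ L')ᶜ) A →
      (∀ (Y : Finset Λ) (W : Op dim), Y ⊆ L' → (diam dist Y : ℝ) ≤ 2 * ξ + 1 →
        SupportedOn dim Y W → opNorm dim W ≤ 1 →
        opNorm dim (A * W - W * A) ≤ B) →
      opNorm dim (A * OL - OL * A) ≤ 2 * (C.card : ℝ) * B * opNorm dim OL := by
  intro C
  induction C using Finset.induction_on with
  | empty =>
    intro L' hL'L hcov A hsupp _
    have hL' : L' = ∅ := by
      by_contra h
      obtain ⟨i, hi⟩ := Finset.nonempty_iff_ne_empty.mpr h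
      obtain ⟨j, hj, -⟩ := hcov i hi
      exact absurd hj (Finset.notMem_empty j)
    subst hL'
    have hcomm : A * OL = OL * A := by
      apply commute_of_disjoint (X := (L \ (∅ : Finset Λ))ᶜ) (Y := L) ?_ hsupp hOL
      rintro i ⟨h1, h2⟩
      rw [Finset.sdiff_empty] at h1
      exact (Finset.mem_compl.mp h1) h2
    rw [hcomm, sub_self, opNorm_zero']
    simp
  | @insert j C' hjC' ih =>
    intro L' hL'L hcov A hsupp hA
    set Q := L' ∩ ball dist {j} ξ with hQdef
    set L'' := L' \ Q with hL''def
    have hQsub : Q ⊆ L' := Finset.inter_subset_left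
    have hQball : ∀ i ∈ Q, (dist i j : ℝ) ≤ ξ := by
      intro i hi
      have hmem := (Finset.mem_inter.mp hi).2
      simp only [ball, Finset.mem_filter, Finset.mem_univ, true_and,
        Finset.mem_singleton] at hmem
      obtain ⟨j', rfl, hd⟩ := hmem
      exact hd
    have hdiamQ : (diam dist Q : ℝ) ≤ 2 * ξ + 1 := diam_le_of_ball hmet hξ0 j hQball
    have hcov'' : ∀ i ∈ L'', ∃ j' ∈ C', (dist i j' : ℝ) ≤ ξ := by
      intro i hi
      obtain ⟨hiL', hiQ⟩ := Finset.mem_sdiff.mp hi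
      obtain ⟨j', hj', hd⟩ := hcov i hiL'
      rcases Finset.mem_insert.mp hj' with rfl | hj'C
      · exfalso
        apply hiQ
        rw [hQdef]
        refine Finset.mem_inter.mpr ⟨hiL', ?_⟩
        simp only [ball, Finset.mem_filter, Finset.mem_univ, true_and, Finset.mem_singleton]
        exact ⟨j', rfl, hd⟩
      · exact ⟨j', hj'C, hd⟩
    set A' := twirl dim Q A with hA'def
    have hsupp' : SupportedOn dim ((L \ L'')ᶜ) A' := by
      refine SupportedOn.mono ?_ (twirl_supportedOn dim (Q := Q) hsupp)
      intro i hi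
      obtain ⟨hi1, hi2⟩ := Finset.mem_sdiff.mp hi
      rw [Finset.mem_compl] at hi1 ⊢
      intro hmem
      obtain ⟨hiL, hiL''⟩ := Finset.mem_sdiff.mp hmem
      apply hi1
      refine Finset.mem_sdiff.mpr ⟨hiL, ?_⟩
      intro hiL'
      have hiQ : i ∈ Q := by
        by_contra hiQ
        exact hiL'' (Finset.mem_sdiff.mpr ⟨hiL', hiQ⟩)
      exact hi2 hiQ
    have hA' : ∀ (Y : Finset Λ) (W : Op dim), Y ⊆ L'' → (diam dist Y : ℝ) ≤ 2 * ξ + 1 →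
        SupportedOn dim Y W → opNorm dim W ≤ 1 →
        opNorm dim (A' * W - W * A') ≤ B := by
      intro Y W hY hdY hW hnW
      have hdisj : ∀ i, ¬(i ∈ Y ∧ i ∈ Q) := by
        rintro i ⟨h1, h2⟩
        have hmem := hY h1
        rw [hL''def] at hmem
        exact (Finset.mem_sdiff.mp hmem).2 h2
      rw [hA'def, twirl_commutator dim hdisj hW A]
      refine le_trans (twirl_opNorm_le dim Q _) ?_
      exact hA Y W (hY.trans Finset.sdiff_subset) hdY hW hnW
    have hih := ih L'' (Finset.sdiff_subset.trans hL'L) hcov'' A' hsupp' hA'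
    have hdiff : opNorm dim (A - A') ≤ B := by
      rw [hA'def]
      apply sub_twirl_opNorm_le
      intro a b
      exact hA Q (weyl dim Q a b) hQsub hdiamQ (supportedOn_weyl dim Q a b)
        (le_of_eq (opNorm_weyl dim Q a b))
    have hsplit : A * OL - OL * A
        = ((A - A') * OL - OL * (A - A')) + (A' * OL - OL * A') := by
      simp only [Matrix.sub_mul, Matrix.mul_sub]
      abel
    have hstep : opNorm dim (A * OL - OL * A)
        ≤ opNorm dim ((A - A') * OL - OL * (A - A')) + opNorm dim (A' * OL - OL * A') := by
      rw [hsplit]; exact opNorm_add_le' _ _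
    have hstep2 : opNorm dim ((A - A') * OL - OL * (A - A'))
        ≤ 2 * B * opNorm dim OL := by
      refine le_trans (opNorm_sub_le' _ _) ?_
      have h1 : opNorm dim ((A - A') * OL) ≤ B * opNorm dim OL :=
        le_trans (opNorm_mul_le' _ _)
          (mul_le_mul_of_nonneg_right hdiff (opNorm_nonneg' _))
      have h2 : opNorm dim (OL * (A - A')) ≤ opNorm dim OL * B :=
        le_trans (opNorm_mul_le' _ _)
          (mul_le_mul_of_nonneg_left hdiff (opNorm_nonneg' _))
      nlinarith [opNorm_nonneg' (dim := dim) OL]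
    have hcard : ((insert j C').card : ℝ) = (C'.card : ℝ) + 1 := by
      rw [Finset.card_insert_of_notMem hjC']
      push_cast
      ring
    calc opNorm dim (A * OL - OL * A)
        ≤ 2 * B * opNorm dim OL + 2 * (C'.card : ℝ) * B * opNorm dim OL :=
          le_trans hstep (add_le_add hstep2 hih)
      _ = 2 * ((insert j C').card : ℝ) * B * opNorm dim OL := by
          rw [hcard]; ring

end MainLemma

/-- Theorem 4, part i: from a Lieb–Robinson bound for local operators to a
bound where one of the two operators is arbitrary. -/
theorem local_to_semiglobal_LR
    (Λ : Type) [Fintype Λ] [DecidableEq Λ]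
    (dist : Λ → Λ → ℕ) (hmet : IsMetricN dist)
    (dim : Λ → ℕ) (hdim : ∀ i, 0 < dim i)
    (ξ ξ₀ t : ℝ) (hξ : 1 ≤ ξ) (hξ₀ : 0 < ξ₀)
    (H₀ : Op dim) (hH₀ : H₀.IsHermitian)
    (F : ℝ → Finset Λ → Finset Λ → ℝ)
    (hFsymm : F t = F (-t))
    (hLR : ∀ s : ℝ, s = t ∨ s = -t →
      ∀ X Y : Finset Λ, (diam dist X : ℝ) ≤ 2 * ξ + 1 → (diam dist Y : ℝ) ≤ 2 * ξ + 1 →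
      ∀ OX OY : Op dim, SupportedOn dim X OX → SupportedOn dim Y OY →
        commNorm dim (heis dim H₀ s OX) OY
          ≤ F s X Y * Real.exp (-(setDist dist X Y : ℝ) / ξ₀) *
            opNorm dim OX * opNorm dim OY) :
    ∀ X L : Finset Λ, (diam dist X : ℝ) ≤ 2 * ξ + 1 →
    ∀ net CL : Finset Λ, IsNet dist ξ net → IsCoarse dist ξ net L CL →
    ∀ OX OL : Op dim, SupportedOn dim X OX → SupportedOn dim L OL →
      commNorm dim (heis dim H₀ t OX) OL
        ≤ 2 * CL.card *
          sSup {v : ℝ | ∃ X' Y' : Finset Λ,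
            (diam dist X' : ℝ) ≤ 2 * ξ + 1 ∧ (diam dist Y' : ℝ) ≤ 2 * ξ + 1 ∧
            v = F t X' Y'} *
          Real.exp (-(setDist dist X L : ℝ) / ξ₀) * opNorm dim OX * opNorm dim OL := by
  intro X L hdiamX net CL hnet hcoarse OX OL hOX hOL
  haveI : ∀ i, NeZero (dim i) := fun i => ⟨(hdim i).ne'⟩
  set S : Set ℝ := {v : ℝ | ∃ X' Y' : Finset Λ,
      (diam dist X' : ℝ) ≤ 2 * ξ + 1 ∧ (diam dist Y' : ℝ) ≤ 2 * ξ + 1 ∧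
      v = F t X' Y'} with hSdef
  have hSfin : S.Finite := by
    apply Set.Finite.subset (Set.finite_range (fun p : Finset Λ × Finset Λ => F t p.1 p.2))
    rintro v ⟨X', Y', -, -, rfl⟩
    exact ⟨(X', Y'), rfl⟩
  have hbdd : BddAbove S := hSfin.bddAbove
  set Fsup : ℝ := sSup S with hFsupdef
  have hFnonneg : ∀ X' Y' : Finset Λ, (diam dist X' : ℝ) ≤ 2 * ξ + 1 →
      (diam dist Y' : ℝ) ≤ 2 * ξ + 1 → 0 ≤ F t X' Y' := by
    intro X' Y' h1 h2
    have hlr := hLR t (Or.inl rfl) X' Y' h1 h2 1 1 (supportedOn_one X') (supportedOn_one Y')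
    rw [commNorm] at hlr
    have hz : heis dim H₀ t 1 * 1 - 1 * heis dim H₀ t 1 = 0 := by
      rw [mul_one, one_mul, sub_self]
    rw [hz, opNorm_zero', opNorm_one'] at hlr
    nlinarith [Real.exp_pos (-(setDist dist X' Y' : ℝ) / ξ₀)]
  have hXX : F t X X ≤ Fsup := le_csSup hbdd ⟨X, X, hdiamX, hdiamX, rfl⟩
  have hFsup0 : 0 ≤ Fsup := le_trans (hFnonneg X X hdiamX hdiamX) hXX
  set B : ℝ := Fsup * Real.exp (-(setDist dist X L : ℝ) / ξ₀) * opNorm dim OX with hBdef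
  have hB0 : 0 ≤ B := by
    apply mul_nonneg (mul_nonneg hFsup0 (Real.exp_pos _).le) (opNorm_nonneg' _)
  have hA0 : ∀ (Y : Finset Λ) (W : Op dim), Y ⊆ L → (diam dist Y : ℝ) ≤ 2 * ξ + 1 →
      SupportedOn dim Y W → opNorm dim W ≤ 1 →
      opNorm dim (heis dim H₀ t OX * W - W * heis dim H₀ t OX) ≤ B := by
    intro Y W hYL hdY hW hnW
    rcases Y.eq_empty_or_nonempty with rfl | hYne
    · have hcomm : heis dim H₀ t OX * W = W * heis dim H₀ t OX := by
        apply commute_of_disjoint (X := Finset.univ) (Y := (∅ : Finset Λ)) ?_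
          (supportedOn_univ _) hW
        rintro i ⟨-, h2⟩
        exact Finset.notMem_empty i h2
      rw [hcomm, sub_self, opNorm_zero']
      exact hB0
    · have hd : (setDist dist X L : ℝ) ≤ (setDist dist X Y : ℝ) := by
        rcases X.eq_empty_or_nonempty with rfl | hXne
        · have h1 : setDist dist ∅ Y = 0 := by
            rw [setDist]
            convert Nat.sInf_empty
            ext n
            simp
          have h2 : setDist dist ∅ L = 0 := by
            rw [setDist]
            convert Nat.sInf_empty
            ext n
            simp
          rw [h1, h2]
        · apply Nat.cast_le.mpr
          obtain ⟨i0, hi0⟩ := hXne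
          obtain ⟨j0, hj0⟩ := hYne
          have hmem : setDist dist X Y ∈ {n : ℕ | ∃ i ∈ X, ∃ jj ∈ Y, dist i jj = n} :=
            Nat.sInf_mem ⟨dist i0 j0, i0, hi0, j0, hj0, rfl⟩
          obtain ⟨i1, hi1, j1, hj1, hd1⟩ := hmem
          rw [setDist]
          exact Nat.sInf_le ⟨i1, hi1, j1, hYL hj1, hd1⟩
      have hbound := hLR t (Or.inl rfl) X Y hdiamX hdY OX W hOX hW
      rw [commNorm] at hbound
      refine le_trans hbound ?_
      have hFY : F t X Y ≤ Fsup := le_csSup hbdd ⟨X, Y, hdiamX, hdY, rfl⟩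
      have hF0 : 0 ≤ F t X Y := hFnonneg X Y hdiamX hdY
      have hexp : Real.exp (-(setDist dist X Y : ℝ) / ξ₀)
          ≤ Real.exp (-(setDist dist X L : ℝ) / ξ₀) := by
        apply Real.exp_le_exp.mpr
        apply div_le_div_of_nonneg_right ?hh hξ₀.le
        case hh => linarith
      rw [hBdef]
      have step1 : F t X Y * Real.exp (-(setDist dist X Y : ℝ) / ξ₀) * opNorm dim OX
            * opNorm dim W
          ≤ F t X Y * Real.exp (-(setDist dist X Y : ℝ) / ξ₀) * opNorm dim OX := by
        have hnn : 0 ≤ F t X Y * Real.exp (-(setDist dist X Y : ℝ) / ξ₀) * opNorm dim OX :=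
          mul_nonneg (mul_nonneg hF0 (Real.exp_pos _).le) (opNorm_nonneg' _)
        nlinarith
      refine le_trans step1 ?_
      have step2 : F t X Y * Real.exp (-(setDist dist X Y : ℝ) / ξ₀)
          ≤ Fsup * Real.exp (-(setDist dist X L : ℝ) / ξ₀) := by
        have e1 : F t X Y * Real.exp (-(setDist dist X Y : ℝ) / ξ₀)
            ≤ F t X Y * Real.exp (-(setDist dist X L : ℝ) / ξ₀) :=
          mul_le_mul_of_nonneg_left hexp hF0
        have e2 : F t X Y * Real.exp (-(setDist dist X L : ℝ) / ξ₀)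
            ≤ Fsup * Real.exp (-(setDist dist X L : ℝ) / ξ₀) :=
          mul_le_mul_of_nonneg_right hFY (Real.exp_pos _).le
        linarith
      exact mul_le_mul_of_nonneg_right step2 (opNorm_nonneg' _)
  have hsupp0 : SupportedOn dim ((L \ L)ᶜ) (heis dim H₀ t OX) := by
    rw [Finset.sdiff_self, Finset.compl_empty]
    exact supportedOn_univ _
  have hmain := main_induction dim hmet (le_trans zero_le_one hξ) hOL hB0 CL L
    (subset_refl L) hcoarse.2.1 (heis dim H₀ t OX) hsupp0 hA0
  rw [commNorm]
  refine le_trans hmain ?_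
  rw [hBdef]
  apply le_of_eq
  ring
end LightCone
end

section
/- Summation over the coarse-grained lattice (Lemma: summation of a decaying function over Λ^{(ξ)}). Let ξ ≥ 1, let x₀ be a real with x₀ ≥ ξ, let i ∈ Λ, and let f : ℝ → [0,∞) be a function with f(x₀) > 0 such that C_{f,x₀} := sup{ z^{D+1}·f(z) / (x₀^{D+1}·f(x₀)) : z ∈ ℝ, z ≥ x₀ } is finite. Then Σ_{j ∈ Λ^{(ξ)} : d(i,j) ≥ x₀} f(d(i,j)) ≤ 2^{D+1}·C_{f,x₀}·γ·D·ξ^{−D}·x₀^{D}·f(x₀). -/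
open scoped Classical

namespace LightCone

variable {Λ : Type} [Fintype Λ] [DecidableEq Λ]

variable (dim : Λ → ℕ)

lemma tele_sum (ξ x₀ : ℝ) (hξ : 0 < ξ) (hx : ξ ≤ x₀) (K : ℕ) :
    ∑ k ∈ Finset.range K, ((x₀ + k * ξ) ^ 2)⁻¹ ≤ 2 / (ξ * x₀) := by
  have hx0 : (0:ℝ) < x₀ := lt_of_lt_of_le hξ hx
  cases K with
  | zero => simp; positivity
  | succ n =>
    rw [Finset.sum_range_succ']
    have h1 : ((x₀ + ((0:ℕ):ℝ) * ξ) ^ 2)⁻¹ ≤ (ξ * x₀)⁻¹ := by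
      push_cast
      rw [zero_mul, add_zero]
      apply inv_anti₀ (by positivity)
      nlinarith
    have h2 : ∑ k ∈ Finset.range n, ((x₀ + ((k+1:ℕ):ℝ) * ξ) ^ 2)⁻¹ ≤ (ξ * x₀)⁻¹ := by
      calc ∑ k ∈ Finset.range n, ((x₀ + ((k+1:ℕ):ℝ) * ξ) ^ 2)⁻¹
          ≤ ∑ k ∈ Finset.range n,
            ((ξ * (x₀ + k * ξ))⁻¹ - (ξ * (x₀ + ((k+1:ℕ):ℝ) * ξ))⁻¹) := by
            apply Finset.sum_le_sum
            intro k _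
            have ha : (0:ℝ) < x₀ + k * ξ := by positivity
            have hb : (0:ℝ) < x₀ + (k+1) * ξ := by positivity
            push_cast
            have heq : (ξ * (x₀ + k * ξ))⁻¹ - (ξ * (x₀ + ((k:ℝ)+1) * ξ))⁻¹
                = ((x₀ + k * ξ) * (x₀ + ((k:ℝ)+1) * ξ))⁻¹ := by
              field_simp
              ring
            rw [heq]
            apply inv_anti₀ (by positivity)
            nlinarith
        _ = (ξ * (x₀ + (0:ℕ) * ξ))⁻¹ - (ξ * (x₀ + n * ξ))⁻¹ := by
            rw [Finset.sum_range_sub' (fun k => (ξ * (x₀ + k * ξ))⁻¹)]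
        _ ≤ (ξ * x₀)⁻¹ := by
            push_cast
            rw [zero_mul, add_zero]
            have : (0:ℝ) < ξ * (x₀ + n * ξ) := by positivity
            have := inv_pos.mpr this
            linarith
    have : 2 / (ξ * x₀) = (ξ * x₀)⁻¹ + (ξ * x₀)⁻¹ := by ring
    rw [this]
    exact add_le_add h2 h1


/-- summation of a decaying function over the coarse-grained lattice. -/
theorem sum_over_coarse_grained_lattice
    (D : ℕ) (hD : 0 < D) (γ : ℝ) (hγ : 1 ≤ γ)
    (Λ : Type) [Fintype Λ] [DecidableEq Λ]
    (dist : Λ → Λ → ℕ) (hmet : IsMetricN dist) (hgeom : GeomConst D γ dist)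
    (ξ x₀ : ℝ) (hξ : 1 ≤ ξ) (hx₀ : ξ ≤ x₀)
    (f : ℝ → ℝ) (hf : ∀ x : ℝ, 0 ≤ f x) (hfx₀ : 0 < f x₀)
    (hbdd : BddAbove {w : ℝ | ∃ z : ℝ, x₀ ≤ z ∧
      w = z ^ (D + 1) * f z / (x₀ ^ (D + 1) * f x₀)}) :
    ∀ net : Finset Λ, IsNet dist ξ net → ∀ i : Λ,
      ∑ j ∈ net.filter (fun j => x₀ ≤ (dist i j : ℝ)), f (dist i j)
        ≤ 2 ^ (D + 1) *
          sSup {w : ℝ | ∃ z : ℝ, x₀ ≤ z ∧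
            w = z ^ (D + 1) * f z / (x₀ ^ (D + 1) * f x₀)} *
          γ * D * (ξ ^ D)⁻¹ * x₀ ^ D * f x₀ := by
  classical
  obtain ⟨m, rfl⟩ : ∃ m, D = m + 1 := ⟨D - 1, (Nat.succ_pred_eq_of_pos hD).symm⟩
  intro net hnet i
  have hξ0 : (0:ℝ) < ξ := lt_of_lt_of_le one_pos hξ
  have hx0 : (0:ℝ) < x₀ := lt_of_lt_of_le hξ0 hx₀
  have hγ0 : (0:ℝ) < γ := lt_of_lt_of_le one_pos hγ
  set C := sSup {w : ℝ | ∃ z : ℝ, x₀ ≤ z ∧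
      w = z ^ (m + 1 + 1) * f z / (x₀ ^ (m + 1 + 1) * f x₀)} with hCdef
  have hC1 : (1:ℝ) ≤ C := by
    apply le_csSup hbdd
    refine ⟨x₀, le_refl _, ?_⟩
    field_simp
  have hC0 : (0:ℝ) < C := lt_of_lt_of_le one_pos hC1
  set g : Λ → ℕ := fun j => ⌊((dist i j : ℝ) - x₀) / ξ⌋₊ with hg
  set S := net.filter (fun j => x₀ ≤ (dist i j : ℝ)) with hSdef
  set K := (S.sup g) + 1 with hK
  have hmaps : ∀ j ∈ S, g j ∈ Finset.range K := fun j hj =>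
    Finset.mem_range.mpr (Nat.lt_succ_of_le (Finset.le_sup hj))
  rw [← Finset.sum_fiberwise_of_maps_to hmaps (fun j => f (dist i j))]
  set A := 2 * γ * ((m:ℝ) + 1) * (2 / ξ) ^ m * (C * x₀ ^ (m + 2) * f x₀) with hA
  have hA0 : 0 ≤ A := by positivity
  have fiberbound : ∀ k ∈ Finset.range K,
      ∑ j ∈ S.filter (fun j => g j = k), f (dist i j)
        ≤ A * ((x₀ + k * ξ) ^ 2)⁻¹ := by
    intro k _
    set a := x₀ + (k:ℝ) * ξ with ha
    have hxa : x₀ ≤ a := by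
      have : (0:ℝ) ≤ (k:ℝ) * ξ := by positivity
      linarith
    have ha0 : (0:ℝ) < a := lt_of_lt_of_le hx0 hxa
    have haξ : ξ ≤ a := le_trans hx₀ hxa
    have hsub : S.filter (fun j => g j = k) ⊆
        net.filter (fun j => a ≤ (dist i j : ℝ) ∧ (dist i j : ℝ) < a + ξ) := by
      intro j hj
      simp only [hSdef, Finset.mem_filter, Finset.filter_filter] at hj ⊢
      obtain ⟨hjnet, hjx, hjk⟩ := hj
      have hnn : 0 ≤ ((dist i j : ℝ) - x₀) / ξ :=
        div_nonneg (sub_nonneg.mpr hjx) hξ0.le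
      rw [hg] at hjk
      simp only at hjk
      rw [Nat.floor_eq_iff hnn] at hjk  -- may need different form
      obtain ⟨hlo, hhi⟩ := hjk
      constructor
      · exact hjnet
      constructor
      · have := (le_div_iff₀ hξ0).mp hlo
        linarith
      · have := (div_lt_iff₀ hξ0).mp hhi
        push_cast at this ⊢
        linarith
    have hcard : ((S.filter (fun j => g j = k)).card : ℝ)
        ≤ 2 * γ * ((m:ℝ) + 1) * (2 * a / ξ) ^ m := by
      calc ((S.filter (fun j => g j = k)).card : ℝ)
          ≤ ((net.filter (fun j => a ≤ (dist i j : ℝ) ∧ (dist i j : ℝ) < a + ξ)).card : ℝ) := by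
            exact_mod_cast Finset.card_le_card hsub
        _ ≤ 2 * γ * ((m+1 : ℕ):ℝ) * (2 * a / ξ) ^ (m + 1 - 1) := hgeom.2.2.2 ξ a hξ haξ net hnet i
        _ = 2 * γ * ((m:ℝ) + 1) * (2 * a / ξ) ^ m := by push_cast [Nat.add_sub_cancel]; ring
    set B := C * x₀ ^ (m + 2) * f x₀ / a ^ (m + 2) with hB
    have hB0 : 0 ≤ B := by positivity
    have termbound : ∀ j ∈ S.filter (fun j => g j = k), f (dist i j) ≤ B := by
      intro j hj
      have hjm := hsub hj
      simp only [Finset.mem_filter] at hjm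
      obtain ⟨-, hda, -⟩ := hjm
      set d := ((dist i j : ℕ) : ℝ) with hd
      have hdx : x₀ ≤ d := le_trans hxa hda
      have hd0 : 0 < d := lt_of_lt_of_le hx0 hdx
      have hmem : d ^ (m + 1 + 1) * f d / (x₀ ^ (m + 1 + 1) * f x₀) ≤ C :=
        le_csSup hbdd ⟨d, hdx, rfl⟩
      have hden : (0:ℝ) < x₀ ^ (m + 1 + 1) * f x₀ := by positivity
      have h1 : d ^ (m + 2) * f d ≤ C * (x₀ ^ (m + 2) * f x₀) := by
        have := (div_le_iff₀ hden).mp hmem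
        calc d ^ (m + 2) * f d = d ^ (m + 1 + 1) * f d := by ring_nf
          _ ≤ C * (x₀ ^ (m + 1 + 1) * f x₀) := this
          _ = C * (x₀ ^ (m + 2) * f x₀) := by ring_nf
      have h2 : f d ≤ C * x₀ ^ (m + 2) * f x₀ / d ^ (m + 2) := by
        rw [le_div_iff₀ (by positivity)]
        nlinarith [pow_pos hd0 (m+2)]
      refine h2.trans ?_
      rw [hB]
      apply div_le_div_of_nonneg_left (by positivity) (by positivity)
      exact pow_le_pow_left₀ ha0.le hda (m + 2)
    calc ∑ j ∈ S.filter (fun j => g j = k), f (dist i j)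
        ≤ (S.filter (fun j => g j = k)).card • B :=
          Finset.sum_le_card_nsmul _ _ _ termbound
      _ = ((S.filter (fun j => g j = k)).card : ℝ) * B := by rw [nsmul_eq_mul]
      _ ≤ (2 * γ * ((m:ℝ) + 1) * (2 * a / ξ) ^ m) * B :=
          mul_le_mul_of_nonneg_right hcard hB0
      _ = A * (a ^ 2)⁻¹ := by
          rw [hA, hB]
          have h2a : (2 * a / ξ) ^ m = (2 / ξ) ^ m * a ^ m := by
            rw [show 2 * a / ξ = (2 / ξ) * a by ring, mul_pow]
          rw [h2a]
          have hpow : a ^ (m + 2) = a ^ m * a ^ 2 := pow_add a m 2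
          rw [hpow]
          field_simp
  calc ∑ k ∈ Finset.range K, ∑ j ∈ S.filter (fun j => g j = k), f (dist i j)
      ≤ ∑ k ∈ Finset.range K, A * ((x₀ + k * ξ) ^ 2)⁻¹ :=
        Finset.sum_le_sum fiberbound
    _ = A * ∑ k ∈ Finset.range K, ((x₀ + k * ξ) ^ 2)⁻¹ := by rw [Finset.mul_sum]
    _ ≤ A * (2 / (ξ * x₀)) :=
        mul_le_mul_of_nonneg_left (tele_sum ξ x₀ hξ0 hx₀ K) hA0
    _ = 2 ^ (m + 1 + 1) * C * γ * ((m + 1:ℕ):ℝ) * (ξ ^ (m + 1))⁻¹ * x₀ ^ (m + 1) * f x₀ := by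
        rw [hA]
        have : (2 / ξ) ^ m = 2 ^ m / ξ ^ m := div_pow 2 ξ m
        rw [this]
        push_cast
        field_simp
        ring

end LightCone
end

section
/- Exponentially weighted sum over the coarse-grained lattice (inequality used in the proof of Theorem 4). Let D be a fixed positive integer, ξ ≥ 1, ξ₀ > 0, and let R be a real number with R + 1 ≥ 3ξ. Then for every i ∈ Λ: Σ_{j ∈ Λ^{(ξ)} : d(i,j) ≥ R+1−2ξ} e^{−(d(i,j) − 2ξ)/ξ₀} ≤ 2^D·D!·γ·(1 + ξ₀/ξ)^D·e^{5ξ/ξ₀}·(1 + (R+1)/ξ)^{D−1}·e^{−(R+1)/ξ₀}. -/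
open scoped Classical

namespace LightCone

variable {Λ : Type} [Fintype Λ] [DecidableEq Λ]

variable (dim : Λ → ℕ)

set_option maxHeartbeats 1000000 in
private lemma pow_le_descFactorial (k d : ℕ) : (k + 1) ^ d ≤ (k + d).descFactorial d := by
  induction d with
  | zero => simp
  | succ d ih =>
    have h : (k + (d + 1)).descFactorial (d + 1) = (k + d + 1) * (k + d).descFactorial d := by
      exact Nat.succ_descFactorial_succ (k + d) d
    rw [h, pow_succ]
    calc (k + 1) ^ d * (k + 1) ≤ (k + d).descFactorial d * (k + 1) :=
          Nat.mul_le_mul_right _ ih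
      _ ≤ (k + d + 1) * (k + d).descFactorial d := by
          rw [Nat.mul_comm]; exact Nat.mul_le_mul (by omega) le_rfl

private lemma sum_choose_geom (q : ℝ) (h0 : 0 ≤ q) (h1 : q < 1) (d : ℕ) :
    ∀ N, ∑ k ∈ Finset.range N, ((k + d).choose d : ℝ) * q ^ k ≤ 1 / (1 - q) ^ (d + 1) := by
  have h1q : (0 : ℝ) < 1 - q := by linarith
  induction d with
  | zero =>
    intro N
    simp only [Nat.add_zero, Nat.choose_zero_right, Nat.cast_one, one_mul]
    rw [geom_sum_eq h1.ne, pow_one]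
    have h2 : (q ^ N - 1) / (q - 1) = (1 - q ^ N) / (1 - q) := by
      rw [← neg_div_neg_eq]; ring_nf
    rw [h2, div_le_div_iff_of_pos_right h1q]
    nlinarith [pow_nonneg h0 N]
  | succ d ih =>
    intro N
    rcases N with _ | n
    · simp; positivity
    · set A := ∑ k ∈ Finset.range (n + 1), ((k + (d + 1)).choose (d + 1) : ℝ) * q ^ k with hA
      have hsplit : A = (∑ k ∈ Finset.range (n + 1), ((k + d).choose d : ℝ) * q ^ k)
          + ∑ k ∈ Finset.range (n + 1), ((k + d).choose (d + 1) : ℝ) * q ^ k := by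
        rw [hA, ← Finset.sum_add_distrib]
        refine Finset.sum_congr rfl fun k _ => ?_
        have h : (k + (d + 1)).choose (d + 1) = (k + d).choose d + (k + d).choose (d + 1) :=
          Nat.choose_succ_succ (k + d) d
        rw [h]; push_cast; ring
      have hC : ∑ k ∈ Finset.range (n + 1), ((k + d).choose (d + 1) : ℝ) * q ^ k ≤ q * A := by
        rw [Finset.sum_range_succ']
        have hzero : ((0 + d).choose (d + 1) : ℝ) = 0 := by
          simp [Nat.choose_eq_zero_of_lt]
        rw [hzero]
        simp only [zero_mul, add_zero, pow_zero]
        have hstep : ∀ k, ((k + 1 + d).choose (d + 1) : ℝ) * q ^ (k + 1)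
            = q * (((k + (d + 1)).choose (d + 1) : ℝ) * q ^ k) := by
          intro k
          have h : k + 1 + d = k + (d + 1) := by omega
          rw [h, pow_succ]; ring
        rw [Finset.sum_congr rfl fun k _ => hstep k, ← Finset.mul_sum]
        apply mul_le_mul_of_nonneg_left _ h0
        rw [hA]
        apply Finset.sum_le_sum_of_subset_of_nonneg (by simp)
        intro k _ _
        positivity
      have hB := ih (n + 1)
      have hAle : A * (1 - q) ≤ 1 / (1 - q) ^ (d + 1) := by nlinarith
      have hfin : A ≤ (1 / (1 - q) ^ (d + 1)) / (1 - q) := by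
        rw [le_div_iff₀ h1q]; exact hAle
      calc A ≤ (1 / (1 - q) ^ (d + 1)) / (1 - q) := hfin
        _ = 1 / (1 - q) ^ (d + 2) := by rw [div_div, ← pow_succ]

private lemma sum_pow_mul_geom (q : ℝ) (h0 : 0 ≤ q) (h1 : q < 1) (d N : ℕ) :
    ∑ k ∈ Finset.range N, ((k : ℝ) + 1) ^ d * q ^ k
      ≤ (d.factorial : ℝ) / (1 - q) ^ (d + 1) := by
  have key : ∀ k : ℕ, ((k : ℝ) + 1) ^ d ≤ (d.factorial : ℝ) * ((k + d).choose d : ℝ) := by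
    intro k
    have h := pow_le_descFactorial k d
    rw [Nat.descFactorial_eq_factorial_mul_choose] at h
    exact_mod_cast h
  calc ∑ k ∈ Finset.range N, ((k : ℝ) + 1) ^ d * q ^ k
      ≤ ∑ k ∈ Finset.range N, (d.factorial : ℝ) * (((k + d).choose d : ℝ) * q ^ k) := by
        refine Finset.sum_le_sum fun k _ => ?_
        rw [← mul_assoc]
        exact mul_le_mul_of_nonneg_right (key k) (pow_nonneg h0 k)
    _ = (d.factorial : ℝ) * ∑ k ∈ Finset.range N, ((k + d).choose d : ℝ) * q ^ k := by
        rw [Finset.mul_sum]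
    _ ≤ (d.factorial : ℝ) * (1 / (1 - q) ^ (d + 1)) := by
        apply mul_le_mul_of_nonneg_left (sum_choose_geom q h0 h1 d N) (by positivity)
    _ = (d.factorial : ℝ) / (1 - q) ^ (d + 1) := by ring

set_option maxHeartbeats 1000000 in
/-- exponentially weighted summation over the coarse-grained lattice. -/
theorem exp_weighted_sum_over_net
    (D : ℕ) (hD : 0 < D) (γ : ℝ) (hγ : 1 ≤ γ)
    (Λ : Type) [Fintype Λ] [DecidableEq Λ]
    (dist : Λ → Λ → ℕ) (hmet : IsMetricN dist) (hgeom : GeomConst D γ dist)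
    (ξ ξ₀ R : ℝ) (hξ : 1 ≤ ξ) (hξ₀ : 0 < ξ₀) (hR : 3 * ξ ≤ R + 1) :
    ∀ net : Finset Λ, IsNet dist ξ net → ∀ i : Λ,
      ∑ j ∈ net.filter (fun j => R + 1 - 2 * ξ ≤ (dist i j : ℝ)),
          Real.exp (-((dist i j : ℝ) - 2 * ξ) / ξ₀)
        ≤ 2 ^ D * (D.factorial : ℝ) * γ * (1 + ξ₀ / ξ) ^ D * Real.exp (5 * ξ / ξ₀) *
          (1 + (R + 1) / ξ) ^ (D - 1) * Real.exp (-(R + 1) / ξ₀) := by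
  obtain ⟨d, rfl⟩ : ∃ d, D = d + 1 := ⟨D - 1, (Nat.succ_pred_eq_of_pos hD).symm⟩
  intro net hnet i
  have hξpos : (0 : ℝ) < ξ := lt_of_lt_of_le one_pos hξ
  have hRpos : (0 : ℝ) < R + 1 := by linarith
  set r₀ : ℝ := R + 1 - 2 * ξ with hr₀
  have hr₀ξ : ξ ≤ r₀ := by rw [hr₀]; linarith
  have hr₀pos : (0 : ℝ) < r₀ := lt_of_lt_of_le hξpos hr₀ξ
  set N : ℕ := (Finset.univ.sup (dist i)) + 1 with hN
  set q : ℝ := Real.exp (-(ξ / ξ₀)) with hq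
  have hq0 : 0 ≤ q := (Real.exp_pos _).le
  have hq1 : q < 1 := by
    rw [hq]
    have hx : (0 : ℝ) < ξ / ξ₀ := by positivity
    calc Real.exp (-(ξ / ξ₀)) < Real.exp 0 := Real.exp_lt_exp.mpr (by linarith)
      _ = 1 := Real.exp_zero
  set shell : ℕ → Finset Λ := fun k =>
    net.filter fun j => r₀ + (k : ℝ) * ξ ≤ (dist i j : ℝ) ∧
      (dist i j : ℝ) < r₀ + (k : ℝ) * ξ + ξ with hshell
  -- decomposition into shells
  have hdecomp : net.filter (fun j => r₀ ≤ (dist i j : ℝ))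
      = (Finset.range N).biUnion shell := by
    ext j
    simp only [Finset.mem_filter, Finset.mem_biUnion, Finset.mem_range, hshell]
    constructor
    · rintro ⟨hjnet, hd⟩
      refine ⟨⌊((dist i j : ℝ) - r₀) / ξ⌋₊, ?_, hjnet, ?_, ?_⟩
      · have h1 : (⌊((dist i j : ℝ) - r₀) / ξ⌋₊ : ℝ) ≤ ((dist i j : ℝ) - r₀) / ξ :=
          Nat.floor_le (div_nonneg (by linarith) hξpos.le)
        have h2 : ((dist i j : ℝ) - r₀) / ξ ≤ (dist i j : ℝ) := by
          rw [div_le_iff₀ hξpos]; nlinarith [Nat.cast_nonneg (α := ℝ) (dist i j)]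
        have h3 : (⌊((dist i j : ℝ) - r₀) / ξ⌋₊ : ℝ) ≤ ((dist i j : ℕ) : ℝ) := le_trans h1 h2
        have h4 : ⌊((dist i j : ℝ) - r₀) / ξ⌋₊ ≤ dist i j := by exact_mod_cast h3
        have h5 : dist i j ≤ Finset.univ.sup (dist i) := Finset.le_sup (Finset.mem_univ j)
        omega
      · have h1 : (⌊((dist i j : ℝ) - r₀) / ξ⌋₊ : ℝ) ≤ ((dist i j : ℝ) - r₀) / ξ :=
          Nat.floor_le (div_nonneg (by linarith) hξpos.le)
        have h2 := (le_div_iff₀ hξpos).mp h1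
        linarith
      · have h1 : ((dist i j : ℝ) - r₀) / ξ < (⌊((dist i j : ℝ) - r₀) / ξ⌋₊ : ℝ) + 1 :=
          Nat.lt_floor_add_one _
        rw [div_lt_iff₀ hξpos] at h1
        nlinarith
    · rintro ⟨k, _, hjnet, h1, _⟩
      refine ⟨hjnet, ?_⟩
      have : (0 : ℝ) ≤ (k : ℝ) * ξ := by positivity
      linarith
  have hdisj : (↑(Finset.range N) : Set ℕ).PairwiseDisjoint shell := by
    intro a _ b _ hab
    apply Finset.disjoint_left.mpr
    intro j hja hjb
    simp only [hshell, Finset.mem_filter] at hja hjb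
    rcases lt_or_gt_of_ne hab with h | h
    · have hcast : (a : ℝ) + 1 ≤ (b : ℝ) := by exact_mod_cast h
      nlinarith [hja.2.2, hjb.2.1]
    · have hcast : (b : ℝ) + 1 ≤ (a : ℝ) := by exact_mod_cast h
      nlinarith [hjb.2.2, hja.2.1]
  set K : ℝ := 2 * γ * ((d : ℝ) + 1) * (2 * (1 + (R + 1) / ξ)) ^ d *
      (Real.exp (4 * ξ / ξ₀) * Real.exp (-(R + 1) / ξ₀)) with hK
  have hb0 : (0 : ℝ) ≤ 1 + (R + 1) / ξ := by
    have := div_nonneg hRpos.le hξpos.le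
    linarith
  have hγ0 : (0 : ℝ) ≤ γ := by linarith
  have h2γd : (0 : ℝ) ≤ 2 * γ * ((d : ℝ) + 1) :=
    mul_nonneg (by linarith) (by positivity)
  have hpowb : (0 : ℝ) ≤ (2 * (1 + (R + 1) / ξ)) ^ d :=
    pow_nonneg (by linarith) d
  have hKnn : 0 ≤ K := by
    rw [hK]
    exact mul_nonneg (mul_nonneg h2γd hpowb)
      (mul_nonneg (Real.exp_nonneg _) (Real.exp_nonneg _))
  have hshell_bound : ∀ k : ℕ,
      ∑ j ∈ shell k, Real.exp (-((dist i j : ℝ) - 2 * ξ) / ξ₀)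
        ≤ K * (((k : ℝ) + 1) ^ d * q ^ k) := by
    intro k
    have hrk : ξ ≤ r₀ + (k : ℝ) * ξ := by
      have : (0 : ℝ) ≤ (k : ℝ) * ξ := by positivity
      linarith
    have hcard := hgeom.2.2.2 ξ (r₀ + (k : ℝ) * ξ) hξ hrk net hnet i
    simp only [Nat.add_sub_cancel] at hcard
    have hE : Real.exp (-((r₀ + (k : ℝ) * ξ) - 2 * ξ) / ξ₀)
        = Real.exp (4 * ξ / ξ₀) * Real.exp (-(R + 1) / ξ₀) * q ^ k := by
      rw [hq, ← Real.exp_nat_mul, ← Real.exp_add, ← Real.exp_add, hr₀]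
      congr 1
      field_simp
      ring
    have hsum : ∑ j ∈ shell k, Real.exp (-((dist i j : ℝ) - 2 * ξ) / ξ₀)
        ≤ (shell k).card • Real.exp (-((r₀ + (k : ℝ) * ξ) - 2 * ξ) / ξ₀) := by
      apply Finset.sum_le_card_nsmul
      intro j hj
      simp only [hshell, Finset.mem_filter] at hj
      apply Real.exp_le_exp.mpr
      rw [div_le_div_iff_of_pos_right hξ₀]
      linarith [hj.2.1]
    rw [nsmul_eq_mul] at hsum
    have hcard' : ((shell k).card : ℝ) * Real.exp (-((r₀ + (k : ℝ) * ξ) - 2 * ξ) / ξ₀)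
        ≤ (2 * γ * ((d : ℝ) + 1) * (2 * (r₀ + (k : ℝ) * ξ) / ξ) ^ d) *
          Real.exp (-((r₀ + (k : ℝ) * ξ) - 2 * ξ) / ξ₀) := by
      apply mul_le_mul_of_nonneg_right ?_ (Real.exp_nonneg _)
      convert hcard using 2
      · rfl
      push_cast
      ring
    have hbase : (0 : ℝ) ≤ 2 * (r₀ + (k : ℝ) * ξ) / ξ := by
      apply div_nonneg ?_ hξpos.le
      have : (0 : ℝ) ≤ (k : ℝ) * ξ := by positivity
      linarith
    have hP : (2 * (r₀ + (k : ℝ) * ξ) / ξ) ^ d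
        ≤ (2 * (1 + (R + 1) / ξ)) ^ d * ((k : ℝ) + 1) ^ d := by
      rw [← mul_pow]
      apply pow_le_pow_left₀ hbase
      rw [div_le_iff₀ hξpos]
      have hk0 : (0 : ℝ) ≤ (k : ℝ) := Nat.cast_nonneg k
      have hexpand : 2 * (1 + (R + 1) / ξ) * ((k : ℝ) + 1) * ξ
          = 2 * (ξ + (R + 1)) * ((k : ℝ) + 1) := by
        field_simp
      rw [hexpand, hr₀]
      nlinarith [mul_nonneg hk0 hRpos.le]
    calc ∑ j ∈ shell k, Real.exp (-((dist i j : ℝ) - 2 * ξ) / ξ₀)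
        ≤ ((shell k).card : ℝ) * Real.exp (-((r₀ + (k : ℝ) * ξ) - 2 * ξ) / ξ₀) := hsum
      _ ≤ (2 * γ * ((d : ℝ) + 1) * (2 * (r₀ + (k : ℝ) * ξ) / ξ) ^ d) *
          Real.exp (-((r₀ + (k : ℝ) * ξ) - 2 * ξ) / ξ₀) := hcard'
      _ ≤ (2 * γ * ((d : ℝ) + 1) * ((2 * (1 + (R + 1) / ξ)) ^ d * ((k : ℝ) + 1) ^ d)) *
          Real.exp (-((r₀ + (k : ℝ) * ξ) - 2 * ξ) / ξ₀) := by
          exact mul_le_mul_of_nonneg_right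
            (mul_le_mul_of_nonneg_left hP h2γd) (Real.exp_nonneg _)
      _ = K * (((k : ℝ) + 1) ^ d * q ^ k) := by rw [hE, hK]; ring
  -- inverse bound for the geometric factor
  have h1q : (0 : ℝ) < 1 - q := by linarith
  have hinv : 1 / (1 - q) ≤ 1 + ξ₀ / ξ := by
    have hexp : ξ / ξ₀ + 1 ≤ Real.exp (ξ / ξ₀) := Real.add_one_le_exp _
    have hqmul : q * Real.exp (ξ / ξ₀) = 1 := by
      rw [hq, ← Real.exp_add]; simp
    have h2 : q * (ξ / ξ₀ + 1) ≤ 1 := by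
      calc q * (ξ / ξ₀ + 1) ≤ q * Real.exp (ξ / ξ₀) :=
            mul_le_mul_of_nonneg_left hexp hq0
        _ = 1 := hqmul
    have h2' : q * (ξ + ξ₀) ≤ ξ₀ := by
      have h3 := mul_le_mul_of_nonneg_right h2 hξ₀.le
      have h4 : q * (ξ / ξ₀ + 1) * ξ₀ = q * (ξ + ξ₀) := by
        field_simp
      rw [h4] at h3
      linarith
    rw [div_le_iff₀ h1q]
    have hexp2 : (1 + ξ₀ / ξ) * (1 - q) = (ξ + ξ₀) * (1 - q) / ξ := by
      field_simp
    rw [hexp2, le_div_iff₀ hξpos]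
    nlinarith [h2']
  have hinvpow : 1 / (1 - q) ^ (d + 1) ≤ (1 + ξ₀ / ξ) ^ (d + 1) := by
    rw [← one_div_pow]
    apply pow_le_pow_left₀ (by positivity) hinv
  -- put everything together
  have hmain : ∑ j ∈ net.filter (fun j => r₀ ≤ (dist i j : ℝ)),
      Real.exp (-((dist i j : ℝ) - 2 * ξ) / ξ₀)
      ≤ K * ((d.factorial : ℝ) / (1 - q) ^ (d + 1)) := by
    rw [hdecomp, Finset.sum_biUnion hdisj]
    calc ∑ k ∈ Finset.range N, ∑ j ∈ shell k, Real.exp (-((dist i j : ℝ) - 2 * ξ) / ξ₀)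
        ≤ ∑ k ∈ Finset.range N, K * (((k : ℝ) + 1) ^ d * q ^ k) :=
          Finset.sum_le_sum fun k _ => hshell_bound k
      _ = K * ∑ k ∈ Finset.range N, ((k : ℝ) + 1) ^ d * q ^ k := by rw [Finset.mul_sum]
      _ ≤ K * ((d.factorial : ℝ) / (1 - q) ^ (d + 1)) :=
          mul_le_mul_of_nonneg_left (sum_pow_mul_geom q hq0 hq1 d N) hKnn
  refine hmain.trans ?_
  have hexp45 : Real.exp (4 * ξ / ξ₀) ≤ Real.exp (5 * ξ / ξ₀) := by
    apply Real.exp_le_exp.mpr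
    rw [div_le_div_iff_of_pos_right hξ₀]
    linarith
  calc K * ((d.factorial : ℝ) / (1 - q) ^ (d + 1))
      = (2 * γ * ((d : ℝ) + 1) * (2 * (1 + (R + 1) / ξ)) ^ d * Real.exp (-(R + 1) / ξ₀) *
          (d.factorial : ℝ)) * Real.exp (4 * ξ / ξ₀) * (1 / (1 - q) ^ (d + 1)) := by
        rw [hK]; ring
    _ ≤ (2 * γ * ((d : ℝ) + 1) * (2 * (1 + (R + 1) / ξ)) ^ d * Real.exp (-(R + 1) / ξ₀) *
          (d.factorial : ℝ)) * Real.exp (5 * ξ / ξ₀) * ((1 + ξ₀ / ξ) ^ (d + 1)) := by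
        have hC0 : (0 : ℝ) ≤ 2 * γ * ((d : ℝ) + 1) * (2 * (1 + (R + 1) / ξ)) ^ d *
            Real.exp (-(R + 1) / ξ₀) * (d.factorial : ℝ) :=
          mul_nonneg (mul_nonneg (mul_nonneg h2γd hpowb) (Real.exp_nonneg _))
            (Nat.cast_nonneg _)
        exact mul_le_mul (mul_le_mul_of_nonneg_left hexp45 hC0) hinvpow
          (one_div_nonneg.mpr (pow_nonneg h1q.le _))
          (mul_nonneg hC0 (Real.exp_nonneg _))
    _ = 2 ^ (d + 1) * ((d + 1).factorial : ℝ) * γ * (1 + ξ₀ / ξ) ^ (d + 1) *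
          Real.exp (5 * ξ / ξ₀) * (1 + (R + 1) / ξ) ^ (d + 1 - 1) * Real.exp (-(R + 1) / ξ₀) := by
        simp only [Nat.add_sub_cancel, Nat.factorial_succ, mul_pow, pow_succ]
        push_cast
        ring

end LightCone
end
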